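/- arXiv:0709.2989 — 7 statements merged into one kernel-verified Lean document; each statement's English description precedes it below -/
import Mathlib

section
/- Let Θ ⊂ ℝ^N be a bounded measurable set with positive Lebesgue measure and let U : Θ → [0,1] be measurable. Fix J ≥ 1 and δ > 0, and let π^{(J)} be the probability measure on Θ with density proportional to (U(θ)+δ)^J with respect to Lebesgue measure. Let α ∈ (0,1] and ε ∈ [0,1] and define σ = 1 / ( 1 + ((1+δ)/(ε+1+δ))^J · ( (1/α)·(1+δ)/(ε+δ) − 1 ) · (1+δ)/δ ). Then π^{(J)}{ θ ∈ Θ : θ is an approximate global optimizer of U with value imprecision ε and residual domain α } ≥ σ. -/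
open MeasureTheory Set Filter Topology

set_option maxHeartbeats 1000000

/-- **Theorem 1 of the paper.** If `θ` is sampled from the distribution `π^{(J)}` on `Θ`
with density proportional to `(U θ + δ)^J` w.r.t. Lebesgue measure, then with probability
at least `σ` it is an approximate global optimizer of `U` with value imprecision `ε`
and residual domain `α`. Here `π^{(J)}(A) = ∫_A (U+δ)^J dθ / ∫_Θ (U+δ)^J dθ`. -/
theorem simulated_annealing_confidence {N : ℕ} (Θ : Set (Fin N → ℝ))
    (hΘm : MeasurableSet Θ) (hΘb : Bornology.IsBounded Θ) (hΘpos : 0 < volume Θ)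
    (U : (Fin N → ℝ) → ℝ) (hUmeas : Measurable U)
    (hU : ∀ θ ∈ Θ, U θ ∈ Set.Icc (0 : ℝ) 1)
    (J δ : ℝ) (hJ : 1 ≤ J) (hδ : 0 < δ)
    (α ε : ℝ) (hα : α ∈ Set.Ioc (0 : ℝ) 1) (hε : ε ∈ Set.Icc (0 : ℝ) 1)
    (σ : ℝ)
    (hσ : σ = 1 / (1 + ((1 + δ) / (ε + 1 + δ)) ^ J *
      ((1 / α) * (1 + δ) / (ε + δ) - 1) * ((1 + δ) / δ))) :
    ENNReal.ofReal σ ≤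
      (∫⁻ θ in {θ ∈ Θ | volume {θ' ∈ Θ | U θ' > U θ + ε} ≤ ENNReal.ofReal α * volume Θ},
          ENNReal.ofReal ((U θ + δ) ^ J)) /
      (∫⁻ θ in Θ, ENNReal.ofReal ((U θ + δ) ^ J)) := by
  obtain ⟨hα0, hα1⟩ := hα
  obtain ⟨hε0, hε1⟩ := hε
  have h1δ : (0:ℝ) < 1 + δ := by linarith
  have hεδ : (0:ℝ) < ε + δ := by linarith
  have hε1δ : (0:ℝ) < ε + 1 + δ := by linarith
  have hJ0 : (0:ℝ) ≤ J := by linarith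
  set K : ℝ := ((1 + δ) / (ε + 1 + δ)) ^ J *
      ((1 / α) * (1 + δ) / (ε + δ) - 1) * ((1 + δ) / δ) with hK
  have h1α : 1 ≤ 1 / α := by rw [le_div_iff₀ hα0]; linarith
  have hM0 : 0 ≤ (1 / α) * (1 + δ) / (ε + δ) - 1 := by
    have h : 1 ≤ (1 / α) * (1 + δ) / (ε + δ) := by
      rw [le_div_iff₀ hεδ]; nlinarith
    linarith
  have hβ0 : 0 ≤ ((1 + δ) / (ε + 1 + δ)) ^ J := Real.rpow_nonneg (by positivity) _
  have hK0 : 0 ≤ K := by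
    rw [hK]
    exact mul_nonneg (mul_nonneg hβ0 hM0) (by positivity)
  have h1K : (0:ℝ) < 1 + K := by linarith
  have hσ0 : 0 ≤ σ := by rw [hσ]; positivity
  have hσ1 : σ * (1 + K) = 1 := by rw [hσ]; exact one_div_mul_cancel h1K.ne'
  have hσle1 : σ ≤ 1 := by rw [hσ, div_le_one h1K]; linarith
  have hVfin : volume Θ < ⊤ := hΘb.measure_lt_top
  have hVne : volume Θ ≠ ⊤ := hVfin.ne
  have hV0 : volume Θ ≠ 0 := hΘpos.ne'
  set g : (Fin N → ℝ) → ENNReal := fun θ => ENNReal.ofReal ((U θ + δ) ^ J) with hgdef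
  set T0 : ENNReal := ENNReal.ofReal α * volume Θ with hT0def
  have hT0ne : T0 ≠ ⊤ := ENNReal.mul_ne_top ENNReal.ofReal_ne_top hVne
  -- bounds on the total integral
  have hDub : ∫⁻ θ in Θ, g θ ≤ ENNReal.ofReal ((1 + δ) ^ J) * volume Θ := by
    calc ∫⁻ θ in Θ, g θ ≤ ∫⁻ _ in Θ, ENNReal.ofReal ((1 + δ) ^ J) := by
          refine setLIntegral_mono' hΘm fun θ hθ => ?_
          exact ENNReal.ofReal_le_ofReal
            (Real.rpow_le_rpow (by linarith [(hU θ hθ).1]) (by linarith [(hU θ hθ).2]) hJ0)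
      _ = ENNReal.ofReal ((1 + δ) ^ J) * volume Θ := setLIntegral_const _ _
  have hDlb : ENNReal.ofReal (δ ^ J) * volume Θ ≤ ∫⁻ θ in Θ, g θ := by
    calc ENNReal.ofReal (δ ^ J) * volume Θ = ∫⁻ _ in Θ, ENNReal.ofReal (δ ^ J) :=
          (setLIntegral_const _ _).symm
      _ ≤ ∫⁻ θ in Θ, g θ := by
          refine setLIntegral_mono' hΘm fun θ hθ => ?_
          exact ENNReal.ofReal_le_ofReal
            (Real.rpow_le_rpow hδ.le (by linarith [(hU θ hθ).1]) hJ0)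
  have hDne : ∫⁻ θ in Θ, g θ ≠ ⊤ :=
    (lt_of_le_of_lt hDub (ENNReal.mul_lt_top ENNReal.ofReal_lt_top hVfin)).ne
  have hD0 : ∫⁻ θ in Θ, g θ ≠ 0 := by
    intro h
    rw [h, nonpos_iff_eq_zero] at hDlb
    rcases mul_eq_zero.mp hDlb with h' | h'
    · rw [ENNReal.ofReal_eq_zero] at h'
      exact absurd h' (not_le.mpr (Real.rpow_pos_of_pos hδ J))
    · exact hV0 h'
  -- the trivial case : every point of Θ is an approximate optimizer
  have trivCase : (∀ θ ∈ Θ, volume {θ' ∈ Θ | U θ' > U θ + ε} ≤ T0) →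
      ENNReal.ofReal σ ≤
        (∫⁻ θ in {θ ∈ Θ | volume {θ' ∈ Θ | U θ' > U θ + ε} ≤ T0}, g θ) /
          ∫⁻ θ in Θ, g θ := by
    intro h
    have hset : {θ ∈ Θ | volume {θ' ∈ Θ | U θ' > U θ + ε} ≤ T0} = Θ := by
      ext θ; exact ⟨fun h' => h'.1, fun hθ => ⟨hθ, h θ hθ⟩⟩
    rw [hset, ENNReal.div_self hD0 hDne]
    exact ENNReal.ofReal_le_one.mpr hσle1
  by_cases hcase : ∀ θ ∈ Θ, volume {θ' ∈ Θ | U θ' > U θ + ε} ≤ T0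
  · exact trivCase hcase
  push_neg at hcase
  obtain ⟨θ0, hθ0Θ, hθ0⟩ := hcase
  -- the threshold level ρ
  have hmanti : ∀ y y' : ℝ, y ≤ y' →
      volume {θ' ∈ Θ | U θ' > y'} ≤ volume {θ' ∈ Θ | U θ' > y} :=
    fun y y' hyy' => measure_mono fun θ hθ => ⟨hθ.1, lt_of_le_of_lt hyy' hθ.2⟩
  set S : Set ℝ := {y | 0 ≤ y ∧ T0 < volume {θ' ∈ Θ | U θ' > y}} with hSdef
  have hSne : S.Nonempty := ⟨U θ0 + ε, ⟨by linarith [(hU θ0 hθ0Θ).1], hθ0⟩⟩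
  have hSub : ∀ y ∈ S, y ≤ 1 := by
    intro y hy
    by_contra hy1
    push_neg at hy1
    have hempty : {θ' ∈ Θ | U θ' > y} = (∅ : Set (Fin N → ℝ)) := by
      ext θ
      simp only [mem_setOf_eq, mem_empty_iff_false, iff_false, not_and]
      intro hθ
      exact not_lt.mpr (by linarith [(hU θ hθ).2])
    have h2 := hy.2
    rw [hempty] at h2
    simp at h2
  have hSbdd : BddAbove S := ⟨1, hSub⟩
  set ρ : ℝ := sSup S with hρdef
  have hρ1 : ρ ≤ 1 := csSup_le hSne hSub
  have hρ0 : 0 ≤ ρ := by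
    obtain ⟨y0, hy0⟩ := hSne
    exact le_trans hy0.1 (le_csSup hSbdd hy0)
  have hltρ : ∀ y : ℝ, y < ρ → T0 < volume {θ' ∈ Θ | U θ' > y} := by
    intro y hy
    obtain ⟨y', hy'S, hlt'⟩ := exists_lt_of_lt_csSup hSne hy
    exact lt_of_lt_of_le hy'S.2 (hmanti y y' hlt'.le)
  have hgtρ : ∀ y : ℝ, 0 ≤ y → ρ < y → volume {θ' ∈ Θ | U θ' > y} ≤ T0 := by
    intro y h0 hy
    by_contra h
    push_neg at h
    exact absurd (le_csSup hSbdd ⟨h0, h⟩) (not_le.mpr hy)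
  by_cases hρε : ρ < ε
  · refine trivCase fun θ hθ => ?_
    exact hgtρ _ (by linarith [(hU θ hθ).1]) (by linarith [(hU θ hθ).1])
  have hερ : ε ≤ ρ := not_lt.mp hρε
  have hρδ0 : (0:ℝ) ≤ ρ + δ := by linarith
  have hρεδ0 : (0:ℝ) ≤ ρ - ε + δ := by linarith
  -- the key real inequality
  have hstar : (ρ - ε + δ) ^ J * (1 - α) ≤ K * ((ρ + δ) ^ J * α) := by
    have hb2 : ρ - ε + δ ≤ (ρ + δ) * ((1 + δ) / (ε + 1 + δ)) := by
      rw [mul_div_assoc', le_div_iff₀ hε1δ]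
      nlinarith [mul_nonneg hε0 (by linarith : (0:ℝ) ≤ 1 - ρ)]
    have hpow : (ρ - ε + δ) ^ J ≤ (ρ + δ) ^ J * ((1 + δ) / (ε + 1 + δ)) ^ J := by
      rw [← Real.mul_rpow hρδ0 (by positivity)]
      exact Real.rpow_le_rpow hρεδ0 hb2 hJ0
    have hsecond : 1 - α ≤ ((1 / α) * (1 + δ) / (ε + δ) - 1) * ((1 + δ) / δ) * α := by
      have h1 : 1 / α - 1 ≤ (1 / α) * (1 + δ) / (ε + δ) - 1 := by
        have h2 : 1 / α ≤ (1 / α) * (1 + δ) / (ε + δ) := by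
          rw [le_div_iff₀ hεδ]
          nlinarith [h1α]
        linarith
      have he : (1 / α - 1) * 1 * α = 1 - α := by field_simp
      calc 1 - α = (1 / α - 1) * 1 * α := he.symm
        _ ≤ ((1 / α) * (1 + δ) / (ε + δ) - 1) * ((1 + δ) / δ) * α := by
            refine mul_le_mul_of_nonneg_right ?_ hα0.le
            refine mul_le_mul h1 ?_ zero_le_one hM0
            rw [le_div_iff₀ hδ]; linarith
    have hP0 : 0 ≤ (ρ + δ) ^ J := Real.rpow_nonneg hρδ0 _
    calc (ρ - ε + δ) ^ J * (1 - α)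
        ≤ ((ρ + δ) ^ J * ((1 + δ) / (ε + 1 + δ)) ^ J) * (1 - α) :=
          mul_le_mul_of_nonneg_right hpow (by linarith)
      _ ≤ ((ρ + δ) ^ J * ((1 + δ) / (ε + 1 + δ)) ^ J) *
            (((1 / α) * (1 + δ) / (ε + δ) - 1) * ((1 + δ) / δ) * α) :=
          mul_le_mul_of_nonneg_left hsecond (mul_nonneg hP0 hβ0)
      _ = K * ((ρ + δ) ^ J * α) := by rw [hK]; ring
  -- the main computation, given a good lower set W and bad set B
  have main : ∀ W B : Set (Fin N → ℝ), MeasurableSet W → MeasurableSet B →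
      W ⊆ Θ → B ⊆ Θ → Disjoint W B → (∀ θ ∈ W, ρ ≤ U θ) → (∀ θ ∈ B, U θ ≤ ρ - ε) →
      (∀ θ ∈ Θ \ B, volume {θ' ∈ Θ | U θ' > U θ + ε} ≤ T0) → T0 ≤ volume W →
      ENNReal.ofReal σ ≤
        (∫⁻ θ in {θ ∈ Θ | volume {θ' ∈ Θ | U θ' > U θ + ε} ≤ T0}, g θ) /
          ∫⁻ θ in Θ, g θ := by
    intro W B hWm hBm hWΘ hBΘ hWB hWρ hBρε hGsub hT0W
    have hAlb : ENNReal.ofReal ((ρ + δ) ^ J) * T0 ≤ ∫⁻ θ in Θ \ B, g θ := by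
      calc ENNReal.ofReal ((ρ + δ) ^ J) * T0
          ≤ ENNReal.ofReal ((ρ + δ) ^ J) * volume W := mul_le_mul_right hT0W _
        _ = ∫⁻ _ in W, ENNReal.ofReal ((ρ + δ) ^ J) := (setLIntegral_const _ _).symm
        _ ≤ ∫⁻ θ in W, g θ := by
            refine setLIntegral_mono' hWm fun θ hθ => ?_
            exact ENNReal.ofReal_le_ofReal
              (Real.rpow_le_rpow hρδ0 (by linarith [hWρ θ hθ]) hJ0)
        _ ≤ ∫⁻ θ in Θ \ B, g θ :=
            lintegral_mono' (Measure.restrict_mono (subset_diff.mpr ⟨hWΘ, hWB⟩) le_rfl) le_rfl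
    have hCub : ∫⁻ θ in B, g θ ≤ ENNReal.ofReal ((ρ - ε + δ) ^ J) * volume B := by
      calc ∫⁻ θ in B, g θ ≤ ∫⁻ _ in B, ENNReal.ofReal ((ρ - ε + δ) ^ J) := by
            refine setLIntegral_mono' hBm fun θ hθ => ?_
            exact ENNReal.ofReal_le_ofReal
              (Real.rpow_le_rpow (by linarith [(hU θ (hBΘ hθ)).1])
                (by linarith [hBρε θ hθ]) hJ0)
        _ = ENNReal.ofReal ((ρ - ε + δ) ^ J) * volume B := setLIntegral_const _ _
    have hBvol : volume B ≤ ENNReal.ofReal (1 - α) * volume Θ := by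
      have hsum : volume B + T0 ≤ volume Θ := by
        calc volume B + T0 ≤ volume B + volume W := add_le_add_right hT0W _
          _ = volume (B ∪ W) := (measure_union hWB.symm hWm).symm
          _ ≤ volume Θ := measure_mono (union_subset hBΘ hWΘ)
      have hVeq : volume Θ = ENNReal.ofReal (1 - α) * volume Θ + T0 := by
        rw [hT0def, ← add_mul, ← ENNReal.ofReal_add (by linarith) hα0.le, sub_add_cancel,
          ENNReal.ofReal_one, one_mul]
      rw [hVeq] at hsum
      exact (ENNReal.add_le_add_iff_right hT0ne).mp hsum
    have hCA : ∫⁻ θ in B, g θ ≤ ENNReal.ofReal K * ∫⁻ θ in Θ \ B, g θ := by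
      calc ∫⁻ θ in B, g θ
          ≤ ENNReal.ofReal ((ρ - ε + δ) ^ J) * (ENNReal.ofReal (1 - α) * volume Θ) :=
            le_trans hCub (mul_le_mul_right hBvol _)
        _ = ENNReal.ofReal ((ρ - ε + δ) ^ J * (1 - α)) * volume Θ := by
            rw [ENNReal.ofReal_mul (Real.rpow_nonneg hρεδ0 _), mul_assoc]
        _ ≤ ENNReal.ofReal (K * ((ρ + δ) ^ J * α)) * volume Θ :=
            mul_le_mul_left (ENNReal.ofReal_le_ofReal hstar) _
        _ = ENNReal.ofReal K * (ENNReal.ofReal ((ρ + δ) ^ J) * T0) := by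
            rw [ENNReal.ofReal_mul hK0,
              ENNReal.ofReal_mul (Real.rpow_nonneg hρδ0 _), hT0def]
            ring
        _ ≤ ENNReal.ofReal K * ∫⁻ θ in Θ \ B, g θ := mul_le_mul_right hAlb _
    have hsplit : ∫⁻ θ in Θ, g θ = (∫⁻ θ in Θ \ B, g θ) + ∫⁻ θ in B, g θ := by
      rw [← lintegral_union hBm disjoint_sdiff_left, diff_union_of_subset hBΘ]
    have hnum : ∫⁻ θ in Θ \ B, g θ ≤
        ∫⁻ θ in {θ ∈ Θ | volume {θ' ∈ Θ | U θ' > U θ + ε} ≤ T0}, g θ :=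
      lintegral_mono' (Measure.restrict_mono (fun θ hθ => mem_sep hθ.1 (hGsub θ hθ)) le_rfl) le_rfl
    refine le_trans ?_ (ENNReal.div_le_div_right hnum _)
    rw [ENNReal.le_div_iff_mul_le (Or.inl hD0) (Or.inl hDne)]
    have hone : ENNReal.ofReal σ * (1 + ENNReal.ofReal K) = 1 := by
      rw [show (1 : ENNReal) + ENNReal.ofReal K = ENNReal.ofReal (1 + K) by
          rw [ENNReal.ofReal_add zero_le_one hK0, ENNReal.ofReal_one],
        ← ENNReal.ofReal_mul hσ0, hσ1, ENNReal.ofReal_one]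
    calc ENNReal.ofReal σ * ∫⁻ θ in Θ, g θ
        = ENNReal.ofReal σ * ((∫⁻ θ in Θ \ B, g θ) + ∫⁻ θ in B, g θ) := by rw [hsplit]
      _ ≤ ENNReal.ofReal σ *
            ((∫⁻ θ in Θ \ B, g θ) + ENNReal.ofReal K * ∫⁻ θ in Θ \ B, g θ) :=
          mul_le_mul_right (add_le_add_right hCA _) _
      _ = (ENNReal.ofReal σ * (1 + ENNReal.ofReal K)) * ∫⁻ θ in Θ \ B, g θ := by ring
      _ = ∫⁻ θ in Θ \ B, g θ := by rw [hone, one_mul]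
  by_cases hmρ : T0 < volume {θ' ∈ Θ | U θ' > ρ}
  · -- the supremum level still has a large superlevel set
    refine main {θ' ∈ Θ | U θ' > ρ} {θ' ∈ Θ | U θ' ≤ ρ - ε}
      (hΘm.inter (hUmeas measurableSet_Ioi)) (hΘm.inter (hUmeas measurableSet_Iic))
      (fun θ hθ => hθ.1) (fun θ hθ => hθ.1) ?_ (fun θ hθ => hθ.2.le) (fun θ hθ => hθ.2)
      ?_ hmρ.le
    · rw [Set.disjoint_left]
      intro θ hθW hθB
      have hW2 := hθW.2
      have hB2 := hθB.2
      linarith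
    · rintro θ ⟨hθΘ, hθB⟩
      have hgt : ρ - ε < U θ := by
        by_contra hle
        exact hθB ⟨hθΘ, not_lt.mp hle⟩
      exact hgtρ _ (by linarith [(hU θ hθΘ).1]) (by linarith)
  · -- need continuity from above to reach level ρ
    push_neg at hmρ
    have hWlim : T0 ≤ volume {θ' ∈ Θ | ρ ≤ U θ'} := by
      set E : ℕ → Set (Fin N → ℝ) := fun n => {θ' ∈ Θ | U θ' > ρ - 1 / (n + 1)} with hE
      have hEmeas : ∀ n, MeasurableSet (E n) := fun n => hΘm.inter (hUmeas measurableSet_Ioi)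
      have hEanti : Antitone E := by
        intro n n' hnn' θ hθ
        refine ⟨hθ.1, lt_of_le_of_lt ?_ hθ.2⟩
        have h1 : (1:ℝ) / (n' + 1) ≤ 1 / (n + 1) := by
          apply one_div_le_one_div_of_le (by positivity)
          have hc : (n:ℝ) ≤ (n':ℝ) := by exact_mod_cast hnn'
          linarith
        linarith
      have hInter : ⋂ n, E n = {θ' ∈ Θ | ρ ≤ U θ'} := by
        ext θ
        simp only [hE, mem_iInter, mem_setOf_eq]
        constructor
        · intro h
          refine ⟨(h 0).1, ?_⟩
          by_contra hlt
          push_neg at hlt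
          obtain ⟨n, hn⟩ := exists_nat_one_div_lt (by linarith : (0:ℝ) < ρ - U θ)
          have h2 := (h n).2
          linarith
        · rintro ⟨h1, h2⟩ n
          have hp : (0:ℝ) < 1 / (n + 1) := by positivity
          exact ⟨h1, by linarith⟩
      have hE0 : volume (E 0) ≠ ⊤ := by
        refine ((measure_mono fun θ (h : θ ∈ E 0) => h.1).trans_lt hVfin).ne
      have htend : Tendsto (fun n => volume (E n)) atTop (𝓝 (volume (⋂ n, E n))) :=
        tendsto_measure_iInter_atTop (fun n => (hEmeas n).nullMeasurableSet) hEanti ⟨0, hE0⟩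
      rw [hInter] at htend
      refine ge_of_tendsto htend (Eventually.of_forall fun n => ?_)
      have hpos : (0:ℝ) < 1 / (n + 1) := by positivity
      exact (hltρ (ρ - 1 / (n + 1)) (by linarith)).le
    refine main {θ' ∈ Θ | ρ ≤ U θ'} {θ' ∈ Θ | U θ' < ρ - ε}
      (hΘm.inter (hUmeas measurableSet_Ici)) (hΘm.inter (hUmeas measurableSet_Iio))
      (fun θ hθ => hθ.1) (fun θ hθ => hθ.1) ?_ (fun θ hθ => hθ.2) (fun θ hθ => hθ.2.le)
      ?_ hWlim
    · rw [Set.disjoint_left]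
      intro θ hθW hθB
      have hW2 := hθW.2
      have hB2 := hθB.2
      linarith
    · rintro θ ⟨hθΘ, hθB⟩
      have hge : ρ - ε ≤ U θ := by
        by_contra hlt
        exact hθB ⟨hθΘ, not_le.mp hlt⟩
      calc volume {θ' ∈ Θ | U θ' > U θ + ε}
          ≤ volume {θ' ∈ Θ | U θ' > ρ} := hmanti _ _ (by linarith)
        _ ≤ T0 := hmρ
end

section
/- Let Θ ⊂ ℝ^N be a bounded measurable set with positive Lebesgue measure and let U : Θ → [0,1] be measurable. Fix J ≥ 1 and δ > 0, let π^{(J)} be the probability measure on Θ with density proportional to (U(θ)+δ)^J with respect to Lebesgue measure, let α ∈ (0,1], ε ∈ [0,1], and define σ = 1 / ( 1 + ((1+δ)/(ε+1+δ))^J · ( (1/α)·(1+δ)/(ε+δ) − 1 ) · (1+δ)/δ ). Then for any probability measure P on Θ, P{ θ ∈ Θ : θ is an approximate global optimizer of U with value imprecision ε and residual domain α } ≥ σ − ‖P − π^{(J)}‖_TV. -/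
open MeasureTheory Set

private lemma sa_K_nonneg {J δ α ε : ℝ} (hδ : 0 < δ) (hα0 : 0 < α) (hα1 : α ≤ 1)
    (hε0 : 0 ≤ ε) (hε1 : ε ≤ 1) :
    0 ≤ ((1 + δ) / (ε + 1 + δ)) ^ J * ((1 / α) * (1 + δ) / (ε + δ) - 1) * ((1 + δ) / δ) := by
  have h1 : (0:ℝ) ≤ ((1 + δ) / (ε + 1 + δ)) ^ J := Real.rpow_nonneg (by positivity) _
  have h2 : (1:ℝ) ≤ (1 / α) * (1 + δ) / (ε + δ) := by
    rw [le_div_iff₀ (by linarith : (0:ℝ) < ε + δ), one_mul, one_div, inv_mul_eq_div,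
      le_div_iff₀ hα0]
    nlinarith
  have h3 : (0:ℝ) ≤ (1 + δ) / δ := by positivity
  exact mul_nonneg (mul_nonneg h1 (by linarith)) h3

private lemma sa_key_ineq {J δ α ε t : ℝ} (hJ : 0 ≤ J) (hδ : 0 < δ) (hα0 : 0 < α)
    (hα1 : α ≤ 1) (hε0 : 0 ≤ ε) (hε1 : ε ≤ 1) (htε : ε ≤ t) (ht1 : t ≤ 1) :
    (t - ε + δ) ^ J * (1 - α) ≤
      (((1 + δ) / (ε + 1 + δ)) ^ J * ((1 / α) * (1 + δ) / (ε + δ) - 1) * ((1 + δ) / δ)) *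
        ((t + δ) ^ J * α) := by
  have hp : (0:ℝ) < t + δ := by linarith
  have hq : (0:ℝ) < t - ε + δ := by linarith
  have hd2 : (0:ℝ) < ε + 1 + δ := by linarith
  -- step 1
  have hbase : t - ε + δ ≤ (1 + δ) / (ε + 1 + δ) * (t + δ) := by
    rw [div_mul_eq_mul_div, le_div_iff₀ hd2]
    nlinarith [mul_nonneg hε0 (by linarith : (0:ℝ) ≤ 1 + ε - t)]
  have step1 : (t - ε + δ) ^ J ≤ ((1 + δ) / (ε + 1 + δ)) ^ J * (t + δ) ^ J := by
    calc (t - ε + δ) ^ J ≤ ((1 + δ) / (ε + 1 + δ) * (t + δ)) ^ J :=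
          Real.rpow_le_rpow hq.le hbase hJ
      _ = ((1 + δ) / (ε + 1 + δ)) ^ J * (t + δ) ^ J :=
          Real.mul_rpow (by positivity) hp.le
  -- step 2
  have hid : α * ((1 / α) * (1 + δ) / (ε + δ)) = (1 + δ) / (ε + δ) := by
    field_simp
  have h4 : (1:ℝ) ≤ (1 + δ) / (ε + δ) := by
    rw [le_div_iff₀ (by linarith : (0:ℝ) < ε + δ)]; linarith
  have h5 : (1:ℝ) ≤ (1 + δ) / δ := by
    rw [le_div_iff₀ hδ]; linarith
  have step2 : (1 - α) ≤ α * ((1 / α) * (1 + δ) / (ε + δ) - 1) * ((1 + δ) / δ) := by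
    have h6 : (1 - α) ≤ ((1 + δ) / (ε + δ) - α) := by linarith
    calc (1 - α) = (1 - α) * 1 := (mul_one _).symm
      _ ≤ ((1 + δ) / (ε + δ) - α) * ((1 + δ) / δ) :=
          mul_le_mul h6 h5 zero_le_one (by linarith)
      _ = α * ((1 / α) * (1 + δ) / (ε + δ) - 1) * ((1 + δ) / δ) := by
          rw [mul_sub, hid]; ring
  have hA : (0:ℝ) ≤ ((1 + δ) / (ε + 1 + δ)) ^ J * (t + δ) ^ J :=
    mul_nonneg (Real.rpow_nonneg (by positivity) _) (Real.rpow_nonneg hp.le _)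
  calc (t - ε + δ) ^ J * (1 - α)
      ≤ (((1 + δ) / (ε + 1 + δ)) ^ J * (t + δ) ^ J) * (1 - α) :=
        mul_le_mul_of_nonneg_right step1 (by linarith)
    _ ≤ (((1 + δ) / (ε + 1 + δ)) ^ J * (t + δ) ^ J) *
          (α * ((1 / α) * (1 + δ) / (ε + δ) - 1) * ((1 + δ) / δ)) :=
        mul_le_mul_of_nonneg_left step2 hA
    _ = (((1 + δ) / (ε + 1 + δ)) ^ J * ((1 / α) * (1 + δ) / (ε + δ) - 1) * ((1 + δ) / δ)) *
          ((t + δ) ^ J * α) := by ring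



/-- **Theorem 2 of the paper.** If `π` is the probability measure on `Θ` with density
proportional to `(U θ + δ)^J` w.r.t. Lebesgue measure, then for any probability measure `P`
concentrated on `Θ` (e.g. the law of the state of a simulated annealing chain), the
`P`-probability of the set of approximate global optimizers of `U` with value imprecision `ε`
and residual domain `α` is at least `σ - ‖P - π‖_TV`, where
`‖P - π‖_TV = sup_A |P(A) - π(A)|`. -/
theorem simulated_annealing_finite_time {N : ℕ} (Θ : Set (Fin N → ℝ))
    (hΘm : MeasurableSet Θ) (hΘb : Bornology.IsBounded Θ) (hΘpos : 0 < volume Θ)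
    (U : (Fin N → ℝ) → ℝ) (hUmeas : Measurable U)
    (hU : ∀ θ ∈ Θ, U θ ∈ Set.Icc (0 : ℝ) 1)
    (J δ : ℝ) (hJ : 1 ≤ J) (hδ : 0 < δ)
    (α ε : ℝ) (hα : α ∈ Set.Ioc (0 : ℝ) 1) (hε : ε ∈ Set.Icc (0 : ℝ) 1)
    (σ : ℝ)
    (hσ : σ = 1 / (1 + ((1 + δ) / (ε + 1 + δ)) ^ J *
      ((1 / α) * (1 + δ) / (ε + δ) - 1) * ((1 + δ) / δ)))
    (π : Measure (Fin N → ℝ)) (hπprob : IsProbabilityMeasure π)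
    (hπ : ∀ A : Set (Fin N → ℝ), MeasurableSet A →
      π A = (∫⁻ θ in A ∩ Θ, ENNReal.ofReal ((U θ + δ) ^ J)) /
            (∫⁻ θ in Θ, ENNReal.ofReal ((U θ + δ) ^ J)))
    (P : Measure (Fin N → ℝ)) (hPprob : IsProbabilityMeasure P) (hPΘ : P Θ = 1) :
    (P {θ ∈ Θ | volume {θ' ∈ Θ | U θ' > U θ + ε} ≤ ENNReal.ofReal α * volume Θ}).toReal ≥
      σ - sSup {r : ℝ | ∃ A : Set (Fin N → ℝ), MeasurableSet A ∧
        r = |(P A).toReal - (π A).toReal|} := by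
  classical
  obtain ⟨hα0, hα1⟩ := hα
  obtain ⟨hε0, hε1⟩ := hε
  have hJ0 : (0:ℝ) ≤ J := le_trans zero_le_one hJ
  set G := {θ ∈ Θ | volume {θ' ∈ Θ | U θ' > U θ + ε} ≤ ENNReal.ofReal α * volume Θ} with hGdef
  set K := ((1 + δ) / (ε + 1 + δ)) ^ J * ((1 / α) * (1 + δ) / (ε + δ) - 1) * ((1 + δ) / δ)
    with hKdef
  have hK0 : 0 ≤ K := sa_K_nonneg hδ hα0 hα1 hε0 hε1
  have hσ1 : σ ≤ 1 := by
    rw [hσ, div_le_one (by linarith)]; linarith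
  -- basic measure facts
  have hvol_top : volume Θ ≠ ⊤ := hΘb.measure_lt_top.ne
  have hvol_ne : volume Θ ≠ 0 := hΘpos.ne'
  have hfmeas : Measurable fun θ => ENNReal.ofReal ((U θ + δ) ^ J) :=
    ENNReal.measurable_ofReal.comp ((hUmeas.add_const δ).pow measurable_const)
  set Z := ∫⁻ θ in Θ, ENNReal.ofReal ((U θ + δ) ^ J) with hZdef
  have hZ_le : Z ≤ ENNReal.ofReal ((1 + δ) ^ J) * volume Θ := by
    calc Z ≤ ∫⁻ _ in Θ, ENNReal.ofReal ((1 + δ) ^ J) := by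
          refine setLIntegral_mono' hΘm fun θ hθ => ?_
          exact ENNReal.ofReal_le_ofReal
            (Real.rpow_le_rpow (by linarith [(hU θ hθ).1]) (by linarith [(hU θ hθ).2]) hJ0)
      _ = ENNReal.ofReal ((1 + δ) ^ J) * volume Θ := setLIntegral_const _ _
  have hZ_top : Z ≠ ⊤ :=
    ne_top_of_le_ne_top (ENNReal.mul_ne_top ENNReal.ofReal_ne_top hvol_top) hZ_le
  have hZ_ge : ENNReal.ofReal (δ ^ J) * volume Θ ≤ Z := by
    calc ENNReal.ofReal (δ ^ J) * volume Θ = ∫⁻ _ in Θ, ENNReal.ofReal (δ ^ J) :=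
          (setLIntegral_const _ _).symm
      _ ≤ Z := by
          refine setLIntegral_mono' hΘm fun θ hθ => ?_
          exact ENNReal.ofReal_le_ofReal
            (Real.rpow_le_rpow hδ.le (by linarith [(hU θ hθ).1]) hJ0)
  have hZ_ne : Z ≠ 0 := by
    refine fun h => absurd (h ▸ hZ_ge) ?_
    simp only [le_zero_iff, mul_eq_zero, not_or]
    exact ⟨(ENNReal.ofReal_pos.2 (Real.rpow_pos_of_pos hδ _)).ne', hvol_ne⟩
  -- the sup set
  set TVs := {r : ℝ | ∃ A : Set (Fin N → ℝ), MeasurableSet A ∧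
      r = |(P A).toReal - (π A).toReal|} with hTVdef
  have hTVbdd : BddAbove TVs := by
    refine ⟨1, ?_⟩
    rintro r ⟨A, hA, rfl⟩
    have h1 : (P A).toReal ≤ 1 := by
      simpa using ENNReal.toReal_mono ENNReal.one_ne_top prob_le_one
    have h2 : (π A).toReal ≤ 1 := by
      simpa using ENNReal.toReal_mono ENNReal.one_ne_top prob_le_one
    have h3 : 0 ≤ (P A).toReal := ENNReal.toReal_nonneg
    have h4 : 0 ≤ (π A).toReal := ENNReal.toReal_nonneg
    rw [abs_le]; constructor <;> linarith
  -- reduce to a bound on π G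
  suffices hmain : MeasurableSet G ∧ σ ≤ (π G).toReal by
    obtain ⟨hGmeas, hπG⟩ := hmain
    have hmem : |(P G).toReal - (π G).toReal| ∈ TVs := ⟨G, hGmeas, rfl⟩
    have hle : |(P G).toReal - (π G).toReal| ≤ sSup TVs := le_csSup hTVbdd hmem
    have habs : (π G).toReal - (P G).toReal ≤ |(P G).toReal - (π G).toReal| := by
      rw [abs_sub_comm]; exact le_abs_self _
    simp only [ge_iff_le, ← hTVdef]
    linarith
  -- π of the whole domain
  have hπΘ : π Θ = 1 := by
    rw [hπ Θ hΘm, inter_self, ← hZdef, ENNReal.div_self hZ_ne hZ_top]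
  by_cases hαeq : α = 1
  · -- residual domain 1 : every point of Θ is an approximate optimizer
    have hGΘ : G = Θ := by
      ext θ
      simp only [hGdef, mem_setOf_eq]
      refine ⟨fun h => h.1, fun hθ => ⟨hθ, ?_⟩⟩
      rw [hαeq, ENNReal.ofReal_one, one_mul]
      exact measure_mono fun θ' h => h.1
    refine ⟨hGΘ ▸ hΘm, ?_⟩
    rw [hGΘ, hπΘ]
    simpa using hσ1
  · have hα1lt : α < 1 := lt_of_le_of_ne hα1 hαeq
    set m : ℝ → ENNReal := fun y => volume {θ' ∈ Θ | U θ' > y} with hmdef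
    have hmanti : ∀ ⦃y y' : ℝ⦄, y ≤ y' → m y' ≤ m y := fun y y' h =>
      measure_mono fun θ' hθ' => ⟨hθ'.1, lt_of_le_of_lt h hθ'.2⟩
    set S := {y : ℝ | m y ≤ ENNReal.ofReal α * volume Θ} with hSdef
    have hm1 : m 1 = 0 := by
      have he : {θ' ∈ Θ | U θ' > 1} = ∅ := by
        ext θ'
        simp only [mem_setOf_eq, mem_empty_iff_false, iff_false, not_and, not_lt]
        exact fun h => (hU θ' h).2
      simp only [hmdef, he, measure_empty]
    have hS1 : (1:ℝ) ∈ S := by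
      simp only [hSdef, mem_setOf_eq, hm1]; exact zero_le
    have hSnonneg : ∀ y ∈ S, (0:ℝ) ≤ y := by
      intro y hy
      by_contra hneg
      push_neg at hneg
      have hset : {θ' ∈ Θ | U θ' > y} = Θ := by
        ext θ'
        simp only [mem_setOf_eq]
        exact ⟨fun h => h.1, fun h => ⟨h, lt_of_lt_of_le hneg (hU θ' h).1⟩⟩
      have hy' : m y ≤ ENNReal.ofReal α * volume Θ := hy
      have hmy : m y = volume Θ := by simp only [hmdef, hset]
      rw [hmy] at hy'
      have hlt : ENNReal.ofReal α * volume Θ < volume Θ := by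
        conv_rhs => rw [← one_mul (volume Θ)]
        exact (ENNReal.mul_lt_mul_iff_left hvol_ne hvol_top).2
          (by simpa using ENNReal.ofReal_lt_one.2 hα1lt)
      exact absurd hy' (not_le.2 hlt)
    set t := sInf S with htdef
    have hSbdd : BddBelow S := ⟨0, hSnonneg⟩
    have ht0 : 0 ≤ t := le_csInf ⟨1, hS1⟩ hSnonneg
    have ht1 : t ≤ 1 := csInf_le hSbdd hS1
    have hupper : ∀ y, t < y → y ∈ S := by
      intro y hy
      obtain ⟨a, haS, hay⟩ := exists_lt_of_csInf_lt ⟨1, hS1⟩ hy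
      exact le_trans (hmanti hay.le) haS
    have hmsets : ∀ y : ℝ, MeasurableSet {θ' ∈ Θ | U θ' > y} := by
      intro y
      have h : {θ' ∈ Θ | U θ' > y} = Θ ∩ U ⁻¹' (Ioi y) := by
        ext θ'; simp [mem_preimage, mem_Ioi]
      rw [h]; exact hΘm.inter (hUmeas measurableSet_Ioi)
    -- continuity from below : m t ≤ α vol Θ
    have htS : t ∈ S := by
      have hU1 : {θ' ∈ Θ | U θ' > t} = ⋃ n : ℕ, {θ' ∈ Θ | U θ' > t + 1/((n:ℝ)+1)} := by
        ext θ'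
        simp only [mem_setOf_eq, mem_iUnion]
        constructor
        · rintro ⟨h1, h2⟩
          obtain ⟨n, hn⟩ := exists_nat_one_div_lt (sub_pos.2 h2)
          exact ⟨n, h1, by linarith⟩
        · rintro ⟨n, h1, h2⟩
          have hpos : (0:ℝ) < 1/((n:ℝ)+1) := by positivity
          exact ⟨h1, by linarith⟩
      have hmon : Monotone fun n : ℕ => {θ' ∈ Θ | U θ' > t + 1/((n:ℝ)+1)} := by
        intro a b hab θ' hθ'
        refine ⟨hθ'.1, lt_of_le_of_lt ?_ hθ'.2⟩
        have hcast : (a:ℝ) ≤ (b:ℝ) := Nat.cast_le.2 hab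
        have h : (1:ℝ)/((b:ℝ)+1) ≤ 1/((a:ℝ)+1) :=
          one_div_le_one_div_of_le (by positivity) (by linarith)
        linarith
      show m t ≤ ENNReal.ofReal α * volume Θ
      have hmt : m t = volume {θ' ∈ Θ | U θ' > t} := rfl
      rw [hmt, hU1, Directed.measure_iUnion hmon.directed_le]
      exact iSup_le fun n => hupper _ (lt_add_of_pos_right _ (by positivity))
    -- the top level set T
    set T := {θ ∈ Θ | t ≤ U θ} with hTdef
    have hTmeas : MeasurableSet T := by
      have h : T = Θ ∩ U ⁻¹' (Ici t) := by
        ext θ; simp [hTdef, mem_preimage]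
      rw [h]; exact hΘm.inter (hUmeas measurableSet_Ici)
    have hTvol : ENNReal.ofReal α * volume Θ ≤ volume T := by
      have hI : T = ⋂ n : ℕ, {θ' ∈ Θ | U θ' > t - 1/((n:ℝ)+1)} := by
        ext θ'
        simp only [hTdef, mem_setOf_eq, mem_iInter]
        constructor
        · rintro ⟨h1, h2⟩ n
          have hpos : (0:ℝ) < 1/((n:ℝ)+1) := by positivity
          exact ⟨h1, by linarith⟩
        · intro h
          refine ⟨(h 0).1, ?_⟩
          by_contra hlt
          push_neg at hlt
          obtain ⟨n, hn⟩ := exists_nat_one_div_lt (sub_pos.2 hlt)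
          have h2 := (h n).2
          simp only [gt_iff_lt] at h2
          linarith
      have hanti : Antitone fun n : ℕ => {θ' ∈ Θ | U θ' > t - 1/((n:ℝ)+1)} := by
        intro a b hab θ' hθ'
        refine ⟨hθ'.1, lt_of_le_of_lt ?_ hθ'.2⟩
        have hcast : (a:ℝ) ≤ (b:ℝ) := Nat.cast_le.2 hab
        have h : (1:ℝ)/((b:ℝ)+1) ≤ 1/((a:ℝ)+1) :=
          one_div_le_one_div_of_le (by positivity) (by linarith)
        linarith
      rw [hI, Directed.measure_iInter (fun n => (hmsets _).nullMeasurableSet)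
        hanti.directed_ge ⟨0, ne_top_of_le_ne_top hvol_top (measure_mono fun θ' h => h.1)⟩]
      refine le_iInf fun n => ?_
      have hlt : t - 1/((n:ℝ)+1) < t := sub_lt_self _ (by positivity)
      have hnotS : t - 1/((n:ℝ)+1) ∉ S := notMem_of_lt_csInf hlt hSbdd
      exact (not_le.1 hnotS).le
    -- characterization of G
    have hGeq : G = {θ ∈ Θ | t - ε ≤ U θ} := by
      ext θ
      simp only [hGdef, mem_setOf_eq]
      constructor
      · rintro ⟨h1, h2⟩
        have hmem : U θ + ε ∈ S := h2
        have hts : t ≤ U θ + ε := csInf_le hSbdd hmem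
        exact ⟨h1, by linarith⟩
      · rintro ⟨h1, h2⟩
        have hle : m (U θ + ε) ≤ ENNReal.ofReal α * volume Θ :=
          le_trans (hmanti (by linarith : t ≤ U θ + ε)) htS
        exact ⟨h1, hle⟩
    have hGmeas : MeasurableSet G := by
      rw [hGeq]
      have h : {θ ∈ Θ | t - ε ≤ U θ} = Θ ∩ U ⁻¹' (Ici (t - ε)) := by
        ext θ; simp [mem_preimage]
      rw [h]; exact hΘm.inter (hUmeas measurableSet_Ici)
    rcases le_or_gt t ε with htε | htε
    · -- bad set is empty
      have hGΘ : G = Θ := by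
        rw [hGeq]; ext θ
        simp only [mem_setOf_eq]
        exact ⟨fun h => h.1, fun h => ⟨h, by linarith [(hU θ h).1]⟩⟩
      refine ⟨hGmeas, ?_⟩
      rw [hGΘ, hπΘ]
      simpa using hσ1
    · -- main case
      set B := Θ \ G with hBdef
      have hGsubΘ : G ⊆ Θ := fun θ h => h.1
      have hBmeas : MeasurableSet B := hΘm.diff hGmeas
      have hTsubG : T ⊆ G := by
        rw [hGeq]; rintro θ ⟨h1, h2⟩; exact ⟨h1, by linarith⟩
      have hTsubΘ : T ⊆ Θ := fun θ h => h.1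
      have hasB : ∀ θ ∈ B, U θ < t - ε := by
        intro θ hθ
        have h2 : θ ∉ G := hθ.2
        rw [hGeq] at h2
        by_contra hc
        push_neg at hc
        exact h2 ⟨hθ.1, hc⟩
      have hdisj : Disjoint B T := disjoint_sdiff_left.mono_right hTsubG
      have hBT : volume B + volume T ≤ volume Θ := by
        rw [← measure_union hdisj hTmeas]
        exact measure_mono (union_subset diff_subset hTsubΘ)
      have hvolB : volume B ≤ ENNReal.ofReal (1 - α) * volume Θ := by
        have h1 : volume B + ENNReal.ofReal α * volume Θ ≤ volume Θ :=
          le_trans (add_le_add_right hTvol _) hBT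
        have h2 : ENNReal.ofReal (1 - α) * volume Θ + ENNReal.ofReal α * volume Θ
            = volume Θ := by
          rw [← add_mul, ← ENNReal.ofReal_add (by linarith) hα0.le]
          norm_num
        have hcne : ENNReal.ofReal α * volume Θ ≠ ⊤ :=
          ENNReal.mul_ne_top ENNReal.ofReal_ne_top hvol_top
        rw [← ENNReal.add_le_add_iff_right hcne, h2]
        exact h1
      have hIB : (∫⁻ θ in B, ENNReal.ofReal ((U θ + δ) ^ J)) ≤
          ENNReal.ofReal ((t - ε + δ) ^ J) * volume B := by
        calc (∫⁻ θ in B, ENNReal.ofReal ((U θ + δ) ^ J))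
            ≤ ∫⁻ _ in B, ENNReal.ofReal ((t - ε + δ) ^ J) := by
              refine setLIntegral_mono' hBmeas fun θ hθ => ?_
              refine ENNReal.ofReal_le_ofReal
                (Real.rpow_le_rpow (by linarith [(hU θ hθ.1).1]) ?_ hJ0)
              linarith [hasB θ hθ]
          _ = _ := setLIntegral_const _ _
      have hIT : ENNReal.ofReal ((t + δ) ^ J) * volume T ≤
          ∫⁻ θ in T, ENNReal.ofReal ((U θ + δ) ^ J) := by
        calc ENNReal.ofReal ((t + δ) ^ J) * volume T
            = ∫⁻ _ in T, ENNReal.ofReal ((t + δ) ^ J) := (setLIntegral_const _ _).symm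
          _ ≤ _ := by
              refine setLIntegral_mono' hTmeas fun θ hθ => ?_
              exact ENNReal.ofReal_le_ofReal
                (Real.rpow_le_rpow (by linarith) (by linarith [hθ.2]) hJ0)
      set IB := ∫⁻ θ in B, ENNReal.ofReal ((U θ + δ) ^ J) with hIBdef
      set IG := ∫⁻ θ in G, ENNReal.ofReal ((U θ + δ) ^ J) with hIGdef
      have hITG : (∫⁻ θ in T, ENNReal.ofReal ((U θ + δ) ^ J)) ≤ IG :=
        lintegral_mono_set hTsubG
      have hIGZ : IG ≤ Z := lintegral_mono_set hGsubΘ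
      have hZeq : Z = IB + IG := by
        rw [hZdef, hIBdef, hIGdef, ← lintegral_union hGmeas disjoint_sdiff_left,
          diff_union_of_subset hGsubΘ]
      have hKmul : IB ≤ ENNReal.ofReal K * IG := by
        have hkey := sa_key_ineq hJ0 hδ hα0 hα1 hε0 hε1 htε.le ht1
        rw [← hKdef] at hkey
        calc IB ≤ ENNReal.ofReal ((t - ε + δ) ^ J) * (ENNReal.ofReal (1 - α) * volume Θ) :=
              le_trans hIB (mul_le_mul_right hvolB _)
          _ = ENNReal.ofReal ((t - ε + δ) ^ J * (1 - α)) * volume Θ := by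
              rw [← mul_assoc, ← ENNReal.ofReal_mul (Real.rpow_nonneg (by linarith) _)]
          _ ≤ ENNReal.ofReal (K * ((t + δ) ^ J * α)) * volume Θ :=
              mul_le_mul_left (ENNReal.ofReal_le_ofReal hkey) _
          _ = ENNReal.ofReal K * (ENNReal.ofReal ((t + δ) ^ J) *
                (ENNReal.ofReal α * volume Θ)) := by
              rw [ENNReal.ofReal_mul hK0, ENNReal.ofReal_mul (Real.rpow_nonneg (by linarith) _),
                mul_assoc, mul_assoc]
          _ ≤ ENNReal.ofReal K * (ENNReal.ofReal ((t + δ) ^ J) * volume T) :=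
              mul_le_mul_right (mul_le_mul_right hTvol _) _
          _ ≤ ENNReal.ofReal K * IG := mul_le_mul_right (le_trans hIT hITG) _
      have hIGpos : IG ≠ 0 := by
        have h1 : (0:ENNReal) < ENNReal.ofReal ((t + δ) ^ J) * (ENNReal.ofReal α * volume Θ) :=
          ENNReal.mul_pos (ENNReal.ofReal_pos.2 (Real.rpow_pos_of_pos (by linarith) _)).ne'
            (ENNReal.mul_pos (ENNReal.ofReal_pos.2 hα0).ne' hvol_ne).ne'
        have h2 : ENNReal.ofReal ((t + δ) ^ J) * (ENNReal.ofReal α * volume Θ) ≤ IG :=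
          le_trans (mul_le_mul_right hTvol _) (le_trans hIT hITG)
        exact (lt_of_lt_of_le h1 h2).ne'
      have hIGtop : IG ≠ ⊤ := ne_top_of_le_ne_top hZ_top hIGZ
      have hIBtop : IB ≠ ⊤ := ne_top_of_le_ne_top hZ_top (hZeq ▸ le_self_add)
      have hπGeq : π G = IG / Z := by
        rw [hπ G hGmeas, inter_eq_left.2 hGsubΘ, hIGdef]
      refine ⟨hGmeas, ?_⟩
      have hb : 0 ≤ IB.toReal := ENNReal.toReal_nonneg
      have hKg : IB.toReal ≤ K * IG.toReal := by
        have h := ENNReal.toReal_mono (ENNReal.mul_ne_top ENNReal.ofReal_ne_top hIGtop) hKmul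
        rwa [ENNReal.toReal_mul, ENNReal.toReal_ofReal hK0] at h
      have hg : 0 < IG.toReal := ENNReal.toReal_pos hIGpos hIGtop
      have hπGtoReal : (π G).toReal = IG.toReal / (IB.toReal + IG.toReal) := by
        rw [hπGeq, hZeq, ENNReal.toReal_div, ENNReal.toReal_add hIBtop hIGtop]
      rw [hπGtoReal, hσ, div_le_div_iff₀ (by linarith) (by linarith)]
      nlinarith [hKg, hg, hb]
end

section
/- Let Θ ⊂ ℝ^N be a bounded measurable set with positive Lebesgue measure and let U : Θ → [0,1] be measurable. If ε > 0 and α ∈ (0,1], then the set of approximate global optimizers of U with value imprecision ε and residual domain α, i.e. { θ ∈ Θ : π_Leb{θ' ∈ Θ : U(θ') > U(θ) + ε} ≤ α · π_Leb(Θ) }, has strictly positive Lebesgue measure. -/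
open MeasureTheory Set

/-- For any measurable optimization criterion `U : Θ → [0,1]` on a bounded measurable set
`Θ ⊂ ℝ^N` of positive Lebesgue measure, if `ε > 0` and `α ∈ (0,1]`, the set of approximate
global optimizers of `U` with value imprecision `ε` and residual domain `α` has strictly
positive Lebesgue measure. -/
theorem approx_optimizers_pos_measure {N : ℕ} (Θ : Set (Fin N → ℝ))
    (hΘm : MeasurableSet Θ) (hΘb : Bornology.IsBounded Θ) (hΘpos : 0 < volume Θ)
    (U : (Fin N → ℝ) → ℝ) (hUmeas : Measurable U)
    (hU : ∀ θ ∈ Θ, U θ ∈ Set.Icc (0 : ℝ) 1)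
    (ε α : ℝ) (hε : 0 < ε) (hα : α ∈ Set.Ioc (0 : ℝ) 1) :
    0 < volume {θ ∈ Θ | volume {θ' ∈ Θ | U θ' > U θ + ε} ≤ ENNReal.ofReal α * volume Θ} := by
  classical
  set A : ℕ → Set (Fin N → ℝ) := fun k => {θ ∈ Θ | U θ > (k : ℝ) * ε} with hA
  have hP : ∃ k : ℕ, volume (A k) ≤ ENNReal.ofReal α * volume Θ := by
    refine ⟨⌈1/ε⌉₊, ?_⟩
    have : A ⌈1/ε⌉₊ = ∅ := by
      ext θ
      simp only [hA, mem_setOf_eq, mem_empty_iff_false, iff_false, not_and, not_lt]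
      intro hθ
      have h1 : U θ ≤ 1 := (hU θ hθ).2
      have h2 : (1:ℝ) ≤ (⌈1/ε⌉₊ : ℝ) * ε := by
        have := Nat.le_ceil (1/ε)
        calc (1:ℝ) = (1/ε) * ε := by field_simp
          _ ≤ (⌈1/ε⌉₊ : ℝ) * ε := by
            apply mul_le_mul_of_nonneg_right this hε.le
      linarith
    rw [this]
    simp
  let k := Nat.find hP
  have hk : volume (A k) ≤ ENNReal.ofReal α * volume Θ := Nat.find_spec hP
  have hpos : (0 : ENNReal) < ENNReal.ofReal α * volume Θ :=
    ENNReal.mul_pos (ENNReal.ofReal_pos.mpr hα.1).ne' hΘpos.ne'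
  rcases Nat.eq_zero_or_pos k with hk0 | hkpos
  · -- every θ ∈ Θ is an optimizer
    have hsub : Θ ⊆ {θ ∈ Θ | volume {θ' ∈ Θ | U θ' > U θ + ε} ≤ ENNReal.ofReal α * volume Θ} := by
      intro θ hθ
      refine ⟨hθ, ?_⟩
      refine le_trans (measure_mono ?_) (hk0 ▸ hk)
      intro θ' ⟨hθ', h⟩
      refine ⟨hθ', ?_⟩
      have h0 : (0:ℝ) ≤ U θ := (hU θ hθ).1
      simp only [Nat.cast_zero, zero_mul]
      linarith
    exact lt_of_lt_of_le hΘpos (measure_mono hsub)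
  · obtain ⟨m, hm⟩ := Nat.exists_eq_succ_of_ne_zero hkpos.ne'
    have hmlt : ¬ volume (A m) ≤ ENNReal.ofReal α * volume Θ :=
      Nat.find_min hP (by omega)
    have hApos : 0 < volume (A m) := lt_of_lt_of_le hpos (not_le.mp hmlt).le
    have hsub : A m ⊆ {θ ∈ Θ | volume {θ' ∈ Θ | U θ' > U θ + ε} ≤ ENNReal.ofReal α * volume Θ} := by
      rintro θ ⟨hθ, hUθ⟩
      refine ⟨hθ, ?_⟩
      refine le_trans (measure_mono ?_) (hm ▸ hk)
      rintro θ' ⟨hθ', h⟩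
      refine ⟨hθ', ?_⟩
      push_cast
      nlinarith
    exact lt_of_lt_of_le hApos (measure_mono hsub)
end

section
/- Let Θ ⊂ ℝ^N be a bounded measurable set with positive Lebesgue measure, let U : Θ → [0,1] be measurable, let δ > 0, U_δ = U + δ, and let π_δ be the probability measure on Θ with density proportional to U_δ with respect to Lebesgue measure. Let ᾱ ∈ (0,1], ρ ∈ (0,1], and define y_ᾱ = inf{ y : π_δ{θ ∈ Θ : U_δ(θ) ≤ y} ≥ 1 − ᾱ }. Then { θ ∈ Θ : π_δ{θ' ∈ Θ : ρ·U_δ(θ') > U_δ(θ)} ≤ ᾱ } = { θ ∈ Θ : U_δ(θ) ≥ ρ·y_ᾱ }. -/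
open MeasureTheory Set

/-- First step in the proof of the paper's Theorem 1: with
`π_δ(A) = ∫_A (U+δ) dθ / ∫_Θ (U+δ) dθ` and
`y_ᾱ = inf { y : π_δ{θ ∈ Θ : U(θ)+δ ≤ y} ≥ 1-ᾱ }`, the set
`{θ ∈ Θ : π_δ{θ' ∈ Θ : ρ(U(θ')+δ) > U(θ)+δ} ≤ ᾱ}` coincides with
`{θ ∈ Θ : U(θ)+δ ≥ ρ y_ᾱ}`. -/
theorem quantile_set_eq {N : ℕ} (Θ : Set (Fin N → ℝ))
    (hΘm : MeasurableSet Θ) (hΘb : Bornology.IsBounded Θ) (hΘpos : 0 < volume Θ)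
    (U : (Fin N → ℝ) → ℝ) (hUmeas : Measurable U)
    (hU : ∀ θ ∈ Θ, U θ ∈ Set.Icc (0 : ℝ) 1)
    (δ : ℝ) (hδ : 0 < δ)
    (πδ : Set (Fin N → ℝ) → ENNReal)
    (hπδ : ∀ A : Set (Fin N → ℝ),
      πδ A = (∫⁻ θ in A ∩ Θ, ENNReal.ofReal (U θ + δ)) /
             (∫⁻ θ in Θ, ENNReal.ofReal (U θ + δ)))
    (ᾱ ρ : ℝ) (hᾱ : ᾱ ∈ Set.Ioc (0 : ℝ) 1) (hρ : ρ ∈ Set.Ioc (0 : ℝ) 1)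
    (y : ℝ)
    (hy : y = sInf {z : ℝ | ENNReal.ofReal (1 - ᾱ) ≤ πδ {θ ∈ Θ | U θ + δ ≤ z}}) :
    {θ ∈ Θ | πδ {θ' ∈ Θ | ρ * (U θ' + δ) > U θ + δ} ≤ ENNReal.ofReal ᾱ} =
      {θ ∈ Θ | ρ * y ≤ U θ + δ} := by
  obtain ⟨hρ0, hρ1⟩ := hρ
  obtain ⟨hᾱ0, hᾱ1⟩ := hᾱ
  set f : (Fin N → ℝ) → ENNReal := fun θ => ENNReal.ofReal (U θ + δ) with hf
  have hfmeas : Measurable f := (hUmeas.add_const δ).ennreal_ofReal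
  set ν : Measure (Fin N → ℝ) := (volume.restrict Θ).withDensity f with hνdef
  set Z : ENNReal := ∫⁻ θ in Θ, f θ with hZdef
  have hνA : ∀ A : Set (Fin N → ℝ), MeasurableSet A → ν A = ∫⁻ θ in A ∩ Θ, f θ := by
    intro A hA
    rw [hνdef, withDensity_apply _ hA, Measure.restrict_restrict hA]
  have hνuniv : ν Set.univ = Z := by
    rw [hνA _ MeasurableSet.univ, Set.univ_inter]
  have hπ : ∀ A, MeasurableSet A → πδ A = ν A / Z := fun A hA => by
    rw [hπδ, hνA A hA]
  have hZ0 : Z ≠ 0 := by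
    have h1 : ENNReal.ofReal δ * volume Θ ≤ Z := by
      rw [hZdef, ← setLIntegral_const Θ (ENNReal.ofReal δ)]
      refine setLIntegral_mono' hΘm fun x hx => ?_
      exact ENNReal.ofReal_le_ofReal (by linarith [(hU x hx).1])
    intro h
    rw [h] at h1
    have hpos := ENNReal.mul_pos (ENNReal.ofReal_pos.mpr hδ).ne' hΘpos.ne'
    exact hpos.ne' (le_antisymm h1 zero_le)
  have hΘfin : volume Θ ≠ ⊤ := hΘb.measure_lt_top.ne
  have hZtop : Z ≠ ⊤ := by
    have h1 : Z ≤ ENNReal.ofReal (1 + δ) * volume Θ := by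
      rw [hZdef, ← setLIntegral_const Θ (ENNReal.ofReal (1 + δ))]
      refine setLIntegral_mono' hΘm fun x hx => ?_
      exact ENNReal.ofReal_le_ofReal (by linarith [(hU x hx).2])
    exact ne_top_of_le_ne_top (ENNReal.mul_ne_top ENNReal.ofReal_ne_top hΘfin) h1
  -- measurability of the sublevel sets
  have hEmeas : ∀ z : ℝ, MeasurableSet {θ ∈ Θ | U θ + δ ≤ z} := fun z =>
    hΘm.inter ((hUmeas.add_const δ) measurableSet_Iic)
  have hνle : ∀ A, ν A ≤ Z := fun A => hνuniv ▸ measure_mono (subset_univ A)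
  have hνfin : ∀ A, ν A ≠ ⊤ := fun A => ne_top_of_le_ne_top hZtop (hνle A)
  -- the quantile set
  set S : Set ℝ := {z : ℝ | ENNReal.ofReal (1 - ᾱ) ≤ πδ {θ ∈ Θ | U θ + δ ≤ z}} with hS
  have hSmono : ∀ z₁ z₂ : ℝ, z₁ ≤ z₂ → z₁ ∈ S → z₂ ∈ S := by
    intro z₁ z₂ h12 h1
    have h1' : ENNReal.ofReal (1 - ᾱ) ≤ πδ {θ ∈ Θ | U θ + δ ≤ z₁} := h1
    show ENNReal.ofReal (1 - ᾱ) ≤ πδ {θ ∈ Θ | U θ + δ ≤ z₂}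
    refine le_trans h1' ?_
    rw [hπ _ (hEmeas z₁), hπ _ (hEmeas z₂)]
    refine ENNReal.div_le_div_right (measure_mono ?_) _
    intro x hx
    simp only [mem_setOf_eq] at hx ⊢
    exact ⟨hx.1, hx.2.trans h12⟩
  have hEΘ : {θ ∈ Θ | U θ + δ ≤ 1 + δ} = Θ := by
    ext x; simp only [mem_setOf_eq, and_iff_left_iff_imp]
    intro hx; linarith [(hU x hx).2]
  have hmemS : (1 + δ : ℝ) ∈ S := by
    rw [hS, mem_setOf_eq, hπ _ (hEmeas _), hEΘ]
    have : ν Θ = Z := by rw [hνA _ hΘm, inter_self]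
    rw [this, ENNReal.div_self hZ0 hZtop]
    exact ENNReal.ofReal_le_one.mpr (by linarith)
  -- main case split on ᾱ = 1
  rcases eq_or_lt_of_le hᾱ1 with hᾱeq | hᾱlt
  · -- ᾱ = 1 : both sides equal Θ
    have hy0 : y = 0 := by
      have hSuniv : S = Set.univ := by
        ext z; simp [hS, hᾱeq]
      rw [hy, hSuniv]
      exact Real.sInf_of_not_bddBelow fun ⟨b, hb⟩ => by
        have := hb (mem_univ (b - 1)); linarith
    ext θ
    simp only [mem_setOf_eq]
    constructor
    · rintro ⟨hθ, -⟩
      refine ⟨hθ, ?_⟩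
      rw [hy0]
      nlinarith [(hU θ hθ).1]
    · rintro ⟨hθ, -⟩
      refine ⟨hθ, ?_⟩
      rw [hᾱeq, ENNReal.ofReal_one]
      set A := {θ' ∈ Θ | ρ * (U θ' + δ) > U θ + δ}
      have hAmeas : MeasurableSet A :=
        hΘm.inter (measurableSet_lt (measurable_const) ((hUmeas.add_const δ).const_mul ρ))
      rw [hπ _ hAmeas]
      exact ENNReal.div_le_of_le_mul (by rw [one_mul]; exact hνle A)
  -- now ᾱ < 1
  have h1ᾱpos : (0 : ℝ) < 1 - ᾱ := by linarith
  -- S is bounded below by δ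
  have hSbdd : BddBelow S := by
    refine ⟨δ, fun z hz => ?_⟩
    by_contra h
    push_neg at h
    have hE : {θ ∈ Θ | U θ + δ ≤ z} = ∅ := by
      ext x; simp only [mem_setOf_eq, mem_empty_iff_false, iff_false, not_and]
      intro hx; linarith [(hU x hx).1]
    rw [hS, mem_setOf_eq, hπ _ (hEmeas z), hE] at hz
    simp only [measure_empty, ENNReal.zero_div, nonpos_iff_eq_zero,
      ENNReal.ofReal_eq_zero] at hz
    linarith
  have hSne : S.Nonempty := ⟨1 + δ, hmemS⟩
  -- translate membership in S
  have hSiff : ∀ z : ℝ, z ∈ S ↔ ENNReal.ofReal (1 - ᾱ) * Z ≤ ν {θ ∈ Θ | U θ + δ ≤ z} := by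
    intro z
    rw [hS, mem_setOf_eq, hπ _ (hEmeas z),
      ENNReal.le_div_iff_mul_le (Or.inl hZ0) (Or.inl hZtop)]
  -- y belongs to S
  have hyS : y ∈ S := by
    have hstep : ∀ ε : ℝ, 0 < ε → y + ε ∈ S := by
      intro ε hε
      obtain ⟨z, hzS, hzlt⟩ := Real.lt_sInf_add_pos hSne hε
      exact hSmono z (y + ε) (by rw [hy]; linarith [hzlt]) hzS
    have hEy : {θ ∈ Θ | U θ + δ ≤ y} =
        ⋂ n : ℕ, {θ ∈ Θ | U θ + δ ≤ y + 1 / (n + 1)} := by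
      ext x
      simp only [mem_iInter, mem_setOf_eq]
      constructor
      · rintro ⟨hx, hle⟩ n
        refine ⟨hx, hle.trans ?_⟩
        have hp : (0:ℝ) < 1/((n:ℝ)+1) := by positivity
        linarith
      · intro h
        refine ⟨(h 0).1, ?_⟩
        by_contra hlt
        push_neg at hlt
        obtain ⟨n, hn⟩ := exists_nat_one_div_lt (sub_pos.mpr hlt)
        have := (h n).2
        linarith
    have hanti : Antitone fun n : ℕ => {θ ∈ Θ | U θ + δ ≤ y + 1 / (n + 1)} := by
      intro m n hmn x hx
      refine ⟨hx.1, hx.2.trans ?_⟩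
      have : (1 : ℝ) / (n + 1) ≤ 1 / (m + 1) := by
        apply one_div_le_one_div_of_le (by positivity)
        exact_mod_cast by omega
      linarith
    have hiInf : ν {θ ∈ Θ | U θ + δ ≤ y} =
        ⨅ n : ℕ, ν {θ ∈ Θ | U θ + δ ≤ y + 1 / (n + 1)} := by
      rw [hEy]
      exact hanti.measure_iInter (fun n => (hEmeas _).nullMeasurableSet)
        ⟨0, hνfin _⟩
    rw [hSiff, hiInf]
    refine le_iInf fun n => ?_
    have := hstep (1 / (n + 1)) (by positivity)
    rwa [hSiff] at this
  have hSchar : ∀ z : ℝ, z ∈ S ↔ y ≤ z := by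
    intro z
    constructor
    · intro hz; rw [hy]; exact csInf_le hSbdd hz
    · intro hz; exact hSmono y z hz hyS
  -- finally, the main equivalence
  ext θ
  simp only [mem_setOf_eq]
  constructor <;> rintro ⟨hθ, hcond⟩ <;> refine ⟨hθ, ?_⟩
  · -- forward direction
    set t : ℝ := U θ + δ with ht
    have hA : MeasurableSet {θ' ∈ Θ | ρ * (U θ' + δ) > t} :=
      hΘm.inter (measurableSet_lt measurable_const ((hUmeas.add_const δ).const_mul ρ))
    have hB : MeasurableSet {θ' ∈ Θ | ρ * (U θ' + δ) ≤ t} :=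
      hΘm.inter (((hUmeas.add_const δ).const_mul ρ) measurableSet_Iic)
    have hadd : ν {θ' ∈ Θ | ρ * (U θ' + δ) > t} + ν {θ' ∈ Θ | ρ * (U θ' + δ) ≤ t} = Z := by
      rw [← measure_union (fun s hs1 hs2 => by
        intro x hx
        exact absurd ((hs2 hx).2) (not_le.mpr ((hs1 hx).2))) hB]
      have : {θ' ∈ Θ | ρ * (U θ' + δ) > t} ∪ {θ' ∈ Θ | ρ * (U θ' + δ) ≤ t} = Θ := by
        ext x
        simp only [mem_union, mem_setOf_eq]
        constructor
        · rintro (h | h) <;> exact h.1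
        · intro hx; rcases le_or_gt (ρ * (U x + δ)) t with h | h
          · exact Or.inr ⟨hx, h⟩
          · exact Or.inl ⟨hx, h⟩
      rw [this, hνA _ hΘm, inter_self]
    -- from hcond deduce ν B ≥ ofReal (1-ᾱ) * Z
    rw [hπ _ hA, ENNReal.div_le_iff hZ0 hZtop] at hcond
    have hνB : ENNReal.ofReal (1 - ᾱ) * Z ≤ ν {θ' ∈ Θ | ρ * (U θ' + δ) ≤ t} := by
      have h1 : (ENNReal.ofReal ᾱ + ENNReal.ofReal (1 - ᾱ)) = 1 := by
        rw [← ENNReal.ofReal_add (le_of_lt hᾱ0) (le_of_lt h1ᾱpos)]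
        norm_num
      have h2 := ENNReal.toReal_le_toReal (hνfin _) (ENNReal.mul_ne_top
        ENNReal.ofReal_ne_top hZtop) |>.mpr hcond
      rw [ENNReal.toReal_mul, ENNReal.toReal_ofReal (le_of_lt hᾱ0)] at h2
      have h3 : (ν {θ' ∈ Θ | ρ * (U θ' + δ) > t}).toReal +
          (ν {θ' ∈ Θ | ρ * (U θ' + δ) ≤ t}).toReal = Z.toReal := by
        rw [← ENNReal.toReal_add (hνfin _) (hνfin _), hadd]
      refine (ENNReal.toReal_le_toReal (ENNReal.mul_ne_top ENNReal.ofReal_ne_top hZtop)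
        (hνfin _)).mp ?_
      rw [ENNReal.toReal_mul, ENNReal.toReal_ofReal (le_of_lt h1ᾱpos)]
      linarith
    -- B equals the sublevel set at t/ρ
    have hBE : {θ' ∈ Θ | ρ * (U θ' + δ) ≤ t} = {θ' ∈ Θ | U θ' + δ ≤ t / ρ} := by
      ext x
      simp only [mem_setOf_eq, and_congr_right_iff]
      intro _
      rw [le_div_iff₀ hρ0, mul_comm]
    rw [hBE] at hνB
    have : t / ρ ∈ S := (hSiff _).mpr hνB
    have hyt : y ≤ t / ρ := (hSchar _).mp this
    calc ρ * y ≤ ρ * (t / ρ) := by nlinarith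
    _ = t := by field_simp
  · -- backward direction
    set t : ℝ := U θ + δ with ht
    have hA : MeasurableSet {θ' ∈ Θ | ρ * (U θ' + δ) > t} :=
      hΘm.inter (measurableSet_lt measurable_const ((hUmeas.add_const δ).const_mul ρ))
    have hB : MeasurableSet {θ' ∈ Θ | ρ * (U θ' + δ) ≤ t} :=
      hΘm.inter (((hUmeas.add_const δ).const_mul ρ) measurableSet_Iic)
    have hadd : ν {θ' ∈ Θ | ρ * (U θ' + δ) > t} + ν {θ' ∈ Θ | ρ * (U θ' + δ) ≤ t} = Z := by
      rw [← measure_union (fun s hs1 hs2 => by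
        intro x hx
        exact absurd ((hs2 hx).2) (not_le.mpr ((hs1 hx).2))) hB]
      have : {θ' ∈ Θ | ρ * (U θ' + δ) > t} ∪ {θ' ∈ Θ | ρ * (U θ' + δ) ≤ t} = Θ := by
        ext x
        simp only [mem_union, mem_setOf_eq]
        constructor
        · rintro (h | h) <;> exact h.1
        · intro hx; rcases le_or_gt (ρ * (U x + δ)) t with h | h
          · exact Or.inr ⟨hx, h⟩
          · exact Or.inl ⟨hx, h⟩
      rw [this, hνA _ hΘm, inter_self]
    have hyt : y ≤ t / ρ := by
      rw [le_div_iff₀ hρ0]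
      nlinarith
    have hBE : {θ' ∈ Θ | ρ * (U θ' + δ) ≤ t} = {θ' ∈ Θ | U θ' + δ ≤ t / ρ} := by
      ext x
      simp only [mem_setOf_eq, and_congr_right_iff]
      intro _
      rw [le_div_iff₀ hρ0, mul_comm]
    have hνB : ENNReal.ofReal (1 - ᾱ) * Z ≤ ν {θ' ∈ Θ | ρ * (U θ' + δ) ≤ t} := by
      rw [hBE]
      exact (hSiff _).mp ((hSchar _).mpr hyt)
    rw [hπ _ hA, ENNReal.div_le_iff hZ0 hZtop]
    have h2 := ENNReal.toReal_le_toReal (ENNReal.mul_ne_top ENNReal.ofReal_ne_top hZtop)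
      (hνfin _) |>.mpr hνB
    rw [ENNReal.toReal_mul, ENNReal.toReal_ofReal (le_of_lt h1ᾱpos)] at h2
    have h3 : (ν {θ' ∈ Θ | ρ * (U θ' + δ) > t}).toReal +
        (ν {θ' ∈ Θ | ρ * (U θ' + δ) ≤ t}).toReal = Z.toReal := by
      rw [← ENNReal.toReal_add (hνfin _) (hνfin _), hadd]
    refine (ENNReal.toReal_le_toReal (hνfin _) (ENNReal.mul_ne_top
      ENNReal.ofReal_ne_top hZtop)).mp ?_
    rw [ENNReal.toReal_mul, ENNReal.toReal_ofReal (le_of_lt hᾱ0)]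
    linarith
end

section
/- Let Θ ⊂ ℝ^N be a bounded measurable set with positive Lebesgue measure, let U : Θ → [0,1] be measurable, let δ > 0, U_δ = U + δ, let J ≥ 1, and let π^{(J)} be the probability measure on Θ with density proportional to U_δ^J with respect to Lebesgue measure; let π_δ = π^{(1)}. Let ᾱ ∈ (0,1], ρ ∈ (0,1], and y_ᾱ = inf{ y : π_δ{θ ∈ Θ : U_δ(θ) ≤ y} ≥ 1 − ᾱ }. Then π^{(J)}{ θ ∈ Θ : U_δ(θ) ≥ ρ·y_ᾱ } ≥ 1 / ( 1 + ρ^J · ((1 − ᾱ)/ᾱ) · ((1+δ)/δ) ). -/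
open MeasureTheory Set

set_option maxHeartbeats 2000000 in
/-- Lower bound on the `π^{(J)}`-probability of the superlevel set `{U+δ ≥ ρ y_ᾱ}`:
`π^{(J)}{θ ∈ Θ : U(θ)+δ ≥ ρ y_ᾱ} ≥ 1/(1 + ρ^J ((1-ᾱ)/ᾱ)((1+δ)/δ))`, where
`π^{(J)}(A) = ∫_A (U+δ)^J dθ / ∫_Θ (U+δ)^J dθ`, `π_δ = π^{(1)}` and
`y_ᾱ = inf { y : π_δ{θ ∈ Θ : U(θ)+δ ≤ y} ≥ 1-ᾱ }`. -/
theorem superlevel_prob_lower_bound {N : ℕ} (Θ : Set (Fin N → ℝ))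
    (hΘm : MeasurableSet Θ) (hΘb : Bornology.IsBounded Θ) (hΘpos : 0 < volume Θ)
    (U : (Fin N → ℝ) → ℝ) (hUmeas : Measurable U)
    (hU : ∀ θ ∈ Θ, U θ ∈ Set.Icc (0 : ℝ) 1)
    (δ J : ℝ) (hδ : 0 < δ) (hJ : 1 ≤ J)
    (πJ : Set (Fin N → ℝ) → ENNReal)
    (hπJ : ∀ A : Set (Fin N → ℝ),
      πJ A = (∫⁻ θ in A ∩ Θ, ENNReal.ofReal ((U θ + δ) ^ J)) /
             (∫⁻ θ in Θ, ENNReal.ofReal ((U θ + δ) ^ J)))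
    (πδ : Set (Fin N → ℝ) → ENNReal)
    (hπδ : ∀ A : Set (Fin N → ℝ),
      πδ A = (∫⁻ θ in A ∩ Θ, ENNReal.ofReal (U θ + δ)) /
             (∫⁻ θ in Θ, ENNReal.ofReal (U θ + δ)))
    (ᾱ ρ : ℝ) (hᾱ : ᾱ ∈ Set.Ioc (0 : ℝ) 1) (hρ : ρ ∈ Set.Ioc (0 : ℝ) 1)
    (y : ℝ)
    (hy : y = sInf {z : ℝ | ENNReal.ofReal (1 - ᾱ) ≤ πδ {θ ∈ Θ | U θ + δ ≤ z}}) :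
    ENNReal.ofReal (1 / (1 + ρ ^ J * ((1 - ᾱ) / ᾱ) * ((1 + δ) / δ))) ≤
      πJ {θ ∈ Θ | ρ * y ≤ U θ + δ} := by
  obtain ⟨hᾱ0, hᾱ1⟩ := hᾱ
  obtain ⟨hρ0, hρ1⟩ := hρ
  have hJ0 : (0:ℝ) ≤ J := by linarith
  have hJ10 : (0:ℝ) ≤ J - 1 := by linarith
  have hfm : Measurable fun θ => U θ + δ := hUmeas.add_const δ
  have hgm : Measurable fun θ => ENNReal.ofReal ((U θ + δ) ^ J) := by measurability
  have hhm : Measurable fun θ => ENNReal.ofReal (U θ + δ) := by measurability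
  have hfδ : ∀ θ ∈ Θ, δ ≤ U θ + δ := fun θ hθ => le_add_of_nonneg_left (hU θ hθ).1
  have hf1 : ∀ θ ∈ Θ, U θ + δ ≤ 1 + δ := fun θ hθ => add_le_add_left (hU θ hθ).2 δ
  set S := ∫⁻ θ in Θ, ENNReal.ofReal (U θ + δ) with hS
  set T := ∫⁻ θ in Θ, ENNReal.ofReal ((U θ + δ) ^ J) with hT
  -- bounds on S and T
  have hS_lb : ENNReal.ofReal δ * volume Θ ≤ S := by
    rw [hS, ← setLIntegral_const Θ (ENNReal.ofReal δ)]
    exact setLIntegral_mono' hΘm fun θ hθ => ENNReal.ofReal_le_ofReal (hfδ θ hθ)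
  have hS0 : S ≠ 0 := by
    refine (lt_of_lt_of_le ?_ hS_lb).ne'
    exact ENNReal.mul_pos (ENNReal.ofReal_pos.mpr hδ).ne' hΘpos.ne'
  have hS_ub : S ≤ ENNReal.ofReal (1 + δ) * volume Θ := by
    rw [hS, ← setLIntegral_const Θ (ENNReal.ofReal (1 + δ))]
    exact setLIntegral_mono' hΘm fun θ hθ => ENNReal.ofReal_le_ofReal (hf1 θ hθ)
  have hSfin : S ≠ ⊤ := by
    refine (lt_of_le_of_lt hS_ub ?_).ne
    exact ENNReal.mul_lt_top ENNReal.ofReal_lt_top hΘb.measure_lt_top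
  have hT_lb : ENNReal.ofReal (δ ^ J) * volume Θ ≤ T := by
    rw [hT, ← setLIntegral_const Θ (ENNReal.ofReal (δ ^ J))]
    refine setLIntegral_mono' hΘm fun θ hθ => ENNReal.ofReal_le_ofReal ?_
    exact Real.rpow_le_rpow hδ.le (hfδ θ hθ) hJ0
  have hT0 : T ≠ 0 := by
    refine (lt_of_lt_of_le ?_ hT_lb).ne'
    refine ENNReal.mul_pos (ENNReal.ofReal_pos.mpr ?_).ne' hΘpos.ne'
    positivity
  have hT_ub : T ≤ ENNReal.ofReal ((1 + δ) ^ J) * volume Θ := by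
    rw [hT, ← setLIntegral_const Θ (ENNReal.ofReal ((1 + δ) ^ J))]
    refine setLIntegral_mono' hΘm fun θ hθ => ENNReal.ofReal_le_ofReal ?_
    refine Real.rpow_le_rpow ?_ (hf1 θ hθ) hJ0
    linarith [(hU θ hθ).1]
  have hTfin : T ≠ ⊤ := by
    refine (lt_of_le_of_lt hT_ub ?_).ne
    exact ENNReal.mul_lt_top ENNReal.ofReal_lt_top hΘb.measure_lt_top
  -- rewrite πδ
  have hsep : ∀ z : ℝ, {θ ∈ Θ | U θ + δ ≤ z} ∩ Θ = {θ ∈ Θ | U θ + δ ≤ z} :=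
    fun z => inter_eq_left.mpr (sep_subset _ _)
  have hπδ' : ∀ z : ℝ, πδ {θ ∈ Θ | U θ + δ ≤ z} =
      (∫⁻ θ in {θ ∈ Θ | U θ + δ ≤ z}, ENNReal.ofReal (U θ + δ)) / S := by
    intro z; rw [hπδ, hsep]
  rcases eq_or_lt_of_le hᾱ1 with hᾱeq | hᾱlt
  · -- degenerate case ᾱ = 1
    have hZuniv : {z : ℝ | ENNReal.ofReal (1 - ᾱ) ≤ πδ {θ ∈ Θ | U θ + δ ≤ z}} = univ := by
      ext z; simp [hᾱeq]
    have hy0 : y = 0 := by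
      rw [hy, hZuniv]
      apply Real.sInf_of_not_bddBelow
      rintro ⟨b, hb⟩
      have := hb (Set.mem_univ (b - 1))
      linarith
    have hAΘ : {θ ∈ Θ | ρ * y ≤ U θ + δ} = Θ := by
      ext θ
      refine ⟨fun h => h.1, fun h => ⟨h, ?_⟩⟩
      rw [hy0, mul_zero]
      linarith [hfδ θ h]
    rw [hAΘ, hπJ, inter_self, ← hT, ENNReal.div_self hT0 hTfin, hᾱeq]
    norm_num
  · -- main case ᾱ < 1
    have h1ᾱ : 0 < 1 - ᾱ := by linarith
    set Z := {z : ℝ | ENNReal.ofReal (1 - ᾱ) ≤ πδ {θ ∈ Θ | U θ + δ ≤ z}} with hZ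
    have hZub : (1 + δ) ∈ Z := by
      have hset : {θ ∈ Θ | U θ + δ ≤ 1 + δ} = Θ := by
        ext θ; exact ⟨fun h => h.1, fun h => ⟨h, hf1 θ h⟩⟩
      show ENNReal.ofReal (1 - ᾱ) ≤ _
      rw [hπδ', hset, ← hS, ENNReal.div_self hS0 hSfin]
      exact ENNReal.ofReal_le_one.mpr (by linarith)
    have hZlb : ∀ z ∈ Z, δ ≤ z := by
      intro z hz
      by_contra hzd
      push_neg at hzd
      have hempty : {θ ∈ Θ | U θ + δ ≤ z} = ∅ := by
        ext θ
        simp only [mem_sep_iff, mem_empty_iff_false, iff_false, not_and, not_le]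
        intro hθ
        exact lt_of_lt_of_le hzd (hfδ θ hθ)
      have hz0 : πδ {θ ∈ Θ | U θ + δ ≤ z} = 0 := by
        rw [hπδ', hempty]
        simp
      have hz' : ENNReal.ofReal (1 - ᾱ) ≤ πδ {θ ∈ Θ | U θ + δ ≤ z} := hz
      rw [hz0] at hz'
      exact absurd hz' (ENNReal.ofReal_pos.mpr h1ᾱ).not_ge
    have hZbdd : BddBelow Z := ⟨δ, hZlb⟩
    have hZne : Z.Nonempty := ⟨_, hZub⟩
    have hyδ : δ ≤ y := hy ▸ le_csInf hZne hZlb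
    have hy1δ : y ≤ 1 + δ := hy ▸ csInf_le hZbdd hZub
    have hypos : 0 < y := lt_of_lt_of_le hδ hyδ
    have hρJ0 : 0 ≤ ρ ^ J := Real.rpow_nonneg hρ0.le J
    have hyJm0 : 0 ≤ y ^ (J - 1) := Real.rpow_nonneg hypos.le _
    have hyJ0 : 0 ≤ y ^ J := Real.rpow_nonneg hypos.le _
    have hfrac1 : (0:ℝ) ≤ (1 - ᾱ) / ᾱ := div_nonneg h1ᾱ.le hᾱ0.le
    have hfrac2 : (0:ℝ) ≤ (1 + δ) / δ := div_nonneg (by linarith) hδ.le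
    -- for z < y, the sublevel integral is at most (1-ᾱ) S
    have hlt : ∀ z : ℝ, z < y →
        (∫⁻ θ in {θ ∈ Θ | U θ + δ ≤ z}, ENNReal.ofReal (U θ + δ)) ≤
          ENNReal.ofReal (1 - ᾱ) * S := by
      intro z hzy
      have hznZ : z ∉ Z := fun hzZ => absurd (hy ▸ csInf_le hZbdd hzZ) (not_le.mpr hzy)
      have hdivlt : (∫⁻ θ in {θ ∈ Θ | U θ + δ ≤ z}, ENNReal.ofReal (U θ + δ)) / S
          < ENNReal.ofReal (1 - ᾱ) := by
        rw [← hπδ']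
        exact lt_of_not_ge hznZ
      calc (∫⁻ θ in {θ ∈ Θ | U θ + δ ≤ z}, ENNReal.ofReal (U θ + δ))
          = (∫⁻ θ in {θ ∈ Θ | U θ + δ ≤ z}, ENNReal.ofReal (U θ + δ)) / S * S :=
            (ENNReal.div_mul_cancel hS0 hSfin).symm
        _ ≤ ENNReal.ofReal (1 - ᾱ) * S := mul_le_mul_left hdivlt.le S
    -- the strict sublevel integral is at most (1-ᾱ) S
    set D := {θ ∈ Θ | U θ + δ < y} with hDdef
    have hDm : MeasurableSet D := hΘm.inter (measurableSet_lt hfm measurable_const)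
    have hD : (∫⁻ θ in D, ENNReal.ofReal (U θ + δ)) ≤ ENNReal.ofReal (1 - ᾱ) * S := by
      set Dn : ℕ → Set (Fin N → ℝ) := fun n => {θ ∈ Θ | U θ + δ ≤ y - 1 / (n + 1)} with hDn
      have hDnm : ∀ n, MeasurableSet (Dn n) :=
        fun n => hΘm.inter (measurableSet_le hfm measurable_const)
      have hDU : D = ⋃ n, Dn n := by
        ext θ
        simp only [hDdef, hDn, mem_sep_iff, mem_iUnion]
        constructor
        · rintro ⟨hθ, hlt'⟩
          have ht : 0 < y - (U θ + δ) := by linarith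
          obtain ⟨n, hn⟩ := exists_nat_gt (1 / (y - (U θ + δ)))
          refine ⟨n, hθ, ?_⟩
          have h1 : 1 < (n : ℝ) * (y - (U θ + δ)) := by
            have h2 := (div_lt_iff₀ ht).mp hn
            linarith
          have hn1 : (0:ℝ) < (n:ℝ) + 1 := by positivity
          have hkey : 1 / ((n:ℝ) + 1) ≤ y - (U θ + δ) := by
            rw [div_le_iff₀ hn1]
            nlinarith
          linarith
        · rintro ⟨n, hθ, hle⟩
          have hn1 : (0:ℝ) < 1 / ((n:ℝ) + 1) := by positivity
          exact ⟨hθ, by linarith⟩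
      have hmono : Monotone Dn := by
        intro m n hmn θ hθ
        obtain ⟨hθΘ, hθle⟩ := hθ
        refine ⟨hθΘ, le_trans hθle ?_⟩
        have h1 : (0:ℝ) < (m:ℝ) + 1 := by positivity
        have h3 : 1 / ((n:ℝ) + 1) ≤ 1 / ((m:ℝ) + 1) := by
          apply one_div_le_one_div_of_le h1
          exact_mod_cast add_le_add_left (Nat.cast_le.mpr hmn) 1
        linarith
      set ν := volume.withDensity (fun θ => ENNReal.ofReal (U θ + δ)) with hν
      have hνD : ν D = ∫⁻ θ in D, ENNReal.ofReal (U θ + δ) := withDensity_apply _ hDm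
      have hνDn : ∀ n, ν (Dn n) = ∫⁻ θ in Dn n, ENNReal.ofReal (U θ + δ) :=
        fun n => withDensity_apply _ (hDnm n)
      have hcont : ν D = ⨆ n, ν (Dn n) := by
        rw [hDU]
        exact hmono.directed_le.measure_iUnion
      rw [← hνD, hcont]
      refine iSup_le fun n => ?_
      rw [hνDn]
      refine hlt _ ?_
      have hpos : (0:ℝ) < 1 / ((n:ℝ) + 1) := by positivity
      linarith
    -- superlevel set at y has mass at least ᾱ S
    set C := {θ ∈ Θ | y ≤ U θ + δ} with hCdef
    have hCm : MeasurableSet C := hΘm.inter (measurableSet_le measurable_const hfm)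
    have hCD : C ∪ D = Θ := by
      ext θ
      simp only [hCdef, hDdef, mem_union, mem_sep_iff]
      constructor
      · rintro (⟨h, _⟩ | ⟨h, _⟩) <;> exact h
      · intro h
        rcases le_or_gt y (U θ + δ) with h' | h'
        · exact Or.inl ⟨h, h'⟩
        · exact Or.inr ⟨h, h'⟩
    have hCDdisj : Disjoint C D := by
      rw [disjoint_left]
      rintro θ ⟨_, h1⟩ ⟨_, h2⟩
      linarith
    have hsplitS : S = (∫⁻ θ in C, ENNReal.ofReal (U θ + δ))
        + ∫⁻ θ in D, ENNReal.ofReal (U θ + δ) := by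
      rw [hS, ← hCD, lintegral_union hDm hCDdisj]
    have hfinprod : ENNReal.ofReal (1 - ᾱ) * S ≠ ⊤ :=
      ENNReal.mul_ne_top ENNReal.ofReal_ne_top hSfin
    have hC : ENNReal.ofReal ᾱ * S ≤ ∫⁻ θ in C, ENNReal.ofReal (U θ + δ) := by
      have hsum : ENNReal.ofReal ᾱ * S + ENNReal.ofReal (1 - ᾱ) * S = S := by
        rw [← add_mul, ← ENNReal.ofReal_add hᾱ0.le h1ᾱ.le]
        norm_num
      have hineq : ENNReal.ofReal ᾱ * S + ENNReal.ofReal (1 - ᾱ) * S ≤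
          (∫⁻ θ in C, ENNReal.ofReal (U θ + δ)) + ENNReal.ofReal (1 - ᾱ) * S :=
        calc ENNReal.ofReal ᾱ * S + ENNReal.ofReal (1 - ᾱ) * S = S := hsum
          _ = (∫⁻ θ in C, ENNReal.ofReal (U θ + δ))
              + ∫⁻ θ in D, ENNReal.ofReal (U θ + δ) := hsplitS
          _ ≤ (∫⁻ θ in C, ENNReal.ofReal (U θ + δ)) + ENNReal.ofReal (1 - ᾱ) * S :=
              add_le_add_right hD _
      exact (ENNReal.add_le_add_iff_right hfinprod).mp hineq
    -- the sets A and B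
    set A := {θ ∈ Θ | ρ * y ≤ U θ + δ} with hAdef
    set B := {θ ∈ Θ | U θ + δ < ρ * y} with hBdef
    have hAm : MeasurableSet A := hΘm.inter (measurableSet_le measurable_const hfm)
    have hBm : MeasurableSet B := hΘm.inter (measurableSet_lt hfm measurable_const)
    set IA := ∫⁻ θ in A, ENNReal.ofReal ((U θ + δ) ^ J) with hIAdef
    set IB := ∫⁻ θ in B, ENNReal.ofReal ((U θ + δ) ^ J) with hIBdef
    have hρy : ρ * y ≤ y := mul_le_of_le_one_left hypos.le hρ1
    have hCA : C ⊆ A := fun θ hθ => ⟨hθ.1, le_trans hρy hθ.2⟩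
    have hBD : B ⊆ D := fun θ hθ => ⟨hθ.1, lt_of_lt_of_le hθ.2 hρy⟩
    -- lower bound on IA
    have hIA : ENNReal.ofReal (ᾱ * y ^ (J - 1)) * S ≤ IA := by
      have step1 : (∫⁻ θ in C, ENNReal.ofReal (y ^ (J - 1)) * ENNReal.ofReal (U θ + δ))
          ≤ ∫⁻ θ in C, ENNReal.ofReal ((U θ + δ) ^ J) := by
        refine setLIntegral_mono' hCm fun θ hθ => ?_
        have hθΘ : θ ∈ Θ := hθ.1
        have hyf : y ≤ U θ + δ := hθ.2
        have hfpos : 0 < U θ + δ := lt_of_lt_of_le hδ (hfδ θ hθΘ)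
        have hsplit : (U θ + δ) ^ (J - 1) * (U θ + δ) = (U θ + δ) ^ J := by
          have h := Real.rpow_add hfpos (J - 1) 1
          rw [Real.rpow_one, sub_add_cancel] at h
          rw [← h]
        rw [← ENNReal.ofReal_mul hyJm0]
        refine ENNReal.ofReal_le_ofReal ?_
        rw [← hsplit]
        have hpow : y ^ (J - 1) ≤ (U θ + δ) ^ (J - 1) :=
          Real.rpow_le_rpow hypos.le hyf hJ10
        exact mul_le_mul_of_nonneg_right hpow hfpos.le
      have step2 : (∫⁻ θ in C, ENNReal.ofReal (y ^ (J - 1)) * ENNReal.ofReal (U θ + δ))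
          = ENNReal.ofReal (y ^ (J - 1)) * ∫⁻ θ in C, ENNReal.ofReal (U θ + δ) :=
        lintegral_const_mul _ hhm
      calc ENNReal.ofReal (ᾱ * y ^ (J - 1)) * S
          = ENNReal.ofReal (y ^ (J - 1)) * (ENNReal.ofReal ᾱ * S) := by
            rw [← mul_assoc, ← ENNReal.ofReal_mul hyJm0, mul_comm (y ^ (J-1)) ᾱ]
        _ ≤ ENNReal.ofReal (y ^ (J - 1)) * ∫⁻ θ in C, ENNReal.ofReal (U θ + δ) :=
            mul_le_mul_right hC _
        _ = ∫⁻ θ in C, ENNReal.ofReal (y ^ (J - 1)) * ENNReal.ofReal (U θ + δ) := step2.symm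
        _ ≤ ∫⁻ θ in C, ENNReal.ofReal ((U θ + δ) ^ J) := step1
        _ ≤ IA := lintegral_mono_set hCA
    -- upper bound on IB
    have hIB : IB * ENNReal.ofReal δ ≤ ENNReal.ofReal (ρ ^ J * y ^ J * (1 - ᾱ)) * S := by
      have e1 : IB * ENNReal.ofReal δ
          = ∫⁻ θ in B, ENNReal.ofReal ((U θ + δ) ^ J) * ENNReal.ofReal δ :=
        (lintegral_mul_const _ hgm).symm
      have e2 : (∫⁻ θ in B, ENNReal.ofReal ((U θ + δ) ^ J) * ENNReal.ofReal δ)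
          ≤ ∫⁻ θ in B, ENNReal.ofReal (ρ ^ J * y ^ J) * ENNReal.ofReal (U θ + δ) := by
        refine setLIntegral_mono' hBm fun θ hθ => ?_
        have hθΘ : θ ∈ Θ := hθ.1
        have hfρy : U θ + δ ≤ ρ * y := hθ.2.le
        have hf0 : 0 ≤ U θ + δ := le_trans hδ.le (hfδ θ hθΘ)
        have hpow : (U θ + δ) ^ J ≤ ρ ^ J * y ^ J := by
          rw [← Real.mul_rpow hρ0.le hypos.le]
          exact Real.rpow_le_rpow hf0 hfρy hJ0
        rw [← ENNReal.ofReal_mul (Real.rpow_nonneg hf0 J),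
          ← ENNReal.ofReal_mul (mul_nonneg hρJ0 hyJ0)]
        refine ENNReal.ofReal_le_ofReal ?_
        exact mul_le_mul hpow (hfδ θ hθΘ) hδ.le (mul_nonneg hρJ0 hyJ0)
      have e3 : (∫⁻ θ in B, ENNReal.ofReal (ρ ^ J * y ^ J) * ENNReal.ofReal (U θ + δ))
          = ENNReal.ofReal (ρ ^ J * y ^ J) * ∫⁻ θ in B, ENNReal.ofReal (U θ + δ) :=
        lintegral_const_mul _ hhm
      have e4 : (∫⁻ θ in B, ENNReal.ofReal (U θ + δ)) ≤ ENNReal.ofReal (1 - ᾱ) * S :=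
        le_trans (lintegral_mono_set hBD) hD
      calc IB * ENNReal.ofReal δ
          = ∫⁻ θ in B, ENNReal.ofReal ((U θ + δ) ^ J) * ENNReal.ofReal δ := e1
        _ ≤ ∫⁻ θ in B, ENNReal.ofReal (ρ ^ J * y ^ J) * ENNReal.ofReal (U θ + δ) := e2
        _ = ENNReal.ofReal (ρ ^ J * y ^ J) * ∫⁻ θ in B, ENNReal.ofReal (U θ + δ) := e3
        _ ≤ ENNReal.ofReal (ρ ^ J * y ^ J) * (ENNReal.ofReal (1 - ᾱ) * S) :=
            mul_le_mul_right e4 _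
        _ = ENNReal.ofReal (ρ ^ J * y ^ J * (1 - ᾱ)) * S := by
            rw [← mul_assoc, ← ENNReal.ofReal_mul (mul_nonneg hρJ0 hyJ0)]
    -- combine: IB ≤ K * IA
    set K := ρ ^ J * ((1 - ᾱ) / ᾱ) * ((1 + δ) / δ) with hKdef
    have hK0 : 0 ≤ K := hKdef ▸ mul_nonneg (mul_nonneg hρJ0 hfrac1) hfrac2
    have hKey : IB ≤ ENNReal.ofReal K * IA := by
      rw [← ENNReal.mul_le_mul_iff_left (c := ENNReal.ofReal δ)
        (ENNReal.ofReal_pos.mpr hδ).ne' ENNReal.ofReal_ne_top]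
      have hyJ : y ^ J = y ^ (J - 1) * y := by
        have h := Real.rpow_add hypos (J - 1) 1
        rw [Real.rpow_one, sub_add_cancel] at h
        exact h
      have hᾱc : (1 - ᾱ) / ᾱ * ᾱ = 1 - ᾱ := div_mul_cancel₀ _ hᾱ0.ne'
      have id1 : ρ ^ J * y ^ J * (1 - ᾱ)
          = (ρ ^ J * y * ((1 - ᾱ) / ᾱ)) * (ᾱ * y ^ (J - 1)) := by
        rw [hyJ]
        calc ρ ^ J * (y ^ (J - 1) * y) * (1 - ᾱ)
            = ρ ^ J * y * ((1 - ᾱ) / ᾱ * ᾱ) * y ^ (J - 1) := by rw [hᾱc]; ring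
          _ = (ρ ^ J * y * ((1 - ᾱ) / ᾱ)) * (ᾱ * y ^ (J - 1)) := by ring
      have hδc : (1 + δ) / δ * δ = 1 + δ := div_mul_cancel₀ _ hδ.ne'
      have id2 : ρ ^ J * (1 + δ) * ((1 - ᾱ) / ᾱ) = K * δ :=
        calc ρ ^ J * (1 + δ) * ((1 - ᾱ) / ᾱ)
            = ρ ^ J * ((1 - ᾱ) / ᾱ) * ((1 + δ) / δ * δ) := by rw [hδc]; ring
          _ = K * δ := by rw [hKdef]; exact (mul_assoc _ _ _).symm
      have c1 : 0 ≤ ρ ^ J * y * ((1 - ᾱ) / ᾱ) :=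
        mul_nonneg (mul_nonneg hρJ0 hypos.le) hfrac1
      have c2 : ρ ^ J * y * ((1 - ᾱ) / ᾱ) ≤ ρ ^ J * (1 + δ) * ((1 - ᾱ) / ᾱ) :=
        mul_le_mul_of_nonneg_right (mul_le_mul_of_nonneg_left hy1δ hρJ0) hfrac1
      calc IB * ENNReal.ofReal δ
          ≤ ENNReal.ofReal (ρ ^ J * y ^ J * (1 - ᾱ)) * S := hIB
        _ = ENNReal.ofReal (ρ ^ J * y * ((1 - ᾱ) / ᾱ))
            * (ENNReal.ofReal (ᾱ * y ^ (J - 1)) * S) := by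
            rw [← mul_assoc, ← ENNReal.ofReal_mul c1, ← id1]
        _ ≤ ENNReal.ofReal (ρ ^ J * y * ((1 - ᾱ) / ᾱ)) * IA := mul_le_mul_right hIA _
        _ ≤ ENNReal.ofReal (ρ ^ J * (1 + δ) * ((1 - ᾱ) / ᾱ)) * IA :=
            mul_le_mul_left (ENNReal.ofReal_le_ofReal c2) _
        _ = ENNReal.ofReal K * IA * ENNReal.ofReal δ := by
            rw [id2, ENNReal.ofReal_mul hK0, mul_assoc, mul_comm (ENNReal.ofReal δ) IA,
              ← mul_assoc]
    -- split T
    have hAB : A ∪ B = Θ := by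
      ext θ
      simp only [hAdef, hBdef, mem_union, mem_sep_iff]
      constructor
      · rintro (⟨h, _⟩ | ⟨h, _⟩) <;> exact h
      · intro h
        rcases le_or_gt (ρ * y) (U θ + δ) with h' | h'
        · exact Or.inl ⟨h, h'⟩
        · exact Or.inr ⟨h, h'⟩
    have hABdisj : Disjoint A B := by
      rw [disjoint_left]
      rintro θ ⟨_, h1⟩ ⟨_, h2⟩
      linarith
    have hsplitT : T = IA + IB := by
      rw [hT, ← hAB, lintegral_union hBm hABdisj]
    -- finish
    have hAΘ : A ∩ Θ = A := inter_eq_left.mpr (sep_subset _ _)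
    rw [hπJ, hAΘ, ← hIAdef]
    rw [ENNReal.le_div_iff_mul_le (Or.inl hT0) (Or.inl hTfin)]
    have h1K : (0:ℝ) < 1 + K := by linarith
    have hone : ENNReal.ofReal (1 / (1 + K)) * (1 + ENNReal.ofReal K) = 1 := by
      rw [← ENNReal.ofReal_one, ← ENNReal.ofReal_add zero_le_one hK0,
        ← ENNReal.ofReal_mul (div_nonneg zero_le_one h1K.le), one_div,
        inv_mul_cancel₀ h1K.ne', ENNReal.ofReal_one]
    calc ENNReal.ofReal (1 / (1 + K)) * T
        = ENNReal.ofReal (1 / (1 + K)) * (IA + IB) := by rw [hsplitT]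
      _ ≤ ENNReal.ofReal (1 / (1 + K)) * (IA + ENNReal.ofReal K * IA) :=
          mul_le_mul_right (add_le_add_right hKey _) _
      _ = ENNReal.ofReal (1 / (1 + K)) * ((1 + ENNReal.ofReal K) * IA) := by
          rw [add_mul, one_mul]
      _ = ENNReal.ofReal (1 / (1 + K)) * (1 + ENNReal.ofReal K) * IA := by
          rw [mul_assoc]
      _ = IA := by rw [hone, one_mul]
end

section
/- Let Θ ⊂ ℝ^N be a bounded measurable set with positive Lebesgue measure, let U : Θ → [0,1] be measurable, let δ > 0, and let π_δ be the probability measure on Θ with density proportional to U + δ with respect to Lebesgue measure. Let ᾱ ∈ (0,1], ε̃ ≥ 0, and set α̃ = ((1+δ)/(ε̃+δ))·ᾱ. Then for any θ ∈ Θ, if π_δ{θ' ∈ Θ : U(θ') > U(θ) + ε̃} ≤ ᾱ, then π_Leb{θ' ∈ Θ : U(θ') > U(θ) + ε̃} ≤ α̃ · π_Leb(Θ). -/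
open MeasureTheory Set

/-- From a `π_δ`-bound to a Lebesgue-measure bound: if
`π_δ{θ' ∈ Θ : U(θ') > U(θ) + ε̃} ≤ ᾱ`, where `π_δ(A) = ∫_A (U+δ) dθ / ∫_Θ (U+δ) dθ`,
then `π_Leb{θ' ∈ Θ : U(θ') > U(θ) + ε̃} ≤ α̃ π_Leb(Θ)` with
`α̃ = ((1+δ)/(ε̃+δ)) ᾱ`. -/
theorem pidelta_to_lebesgue_bound {N : ℕ} (Θ : Set (Fin N → ℝ))
    (hΘm : MeasurableSet Θ) (hΘb : Bornology.IsBounded Θ) (hΘpos : 0 < volume Θ)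
    (U : (Fin N → ℝ) → ℝ) (hUmeas : Measurable U)
    (hU : ∀ θ ∈ Θ, U θ ∈ Set.Icc (0 : ℝ) 1)
    (δ : ℝ) (hδ : 0 < δ)
    (πδ : Set (Fin N → ℝ) → ENNReal)
    (hπδ : ∀ A : Set (Fin N → ℝ),
      πδ A = (∫⁻ θ in A ∩ Θ, ENNReal.ofReal (U θ + δ)) /
             (∫⁻ θ in Θ, ENNReal.ofReal (U θ + δ)))
    (ᾱ ε' α' : ℝ) (hᾱ : ᾱ ∈ Set.Ioc (0 : ℝ) 1) (hε' : 0 ≤ ε')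
    (hα' : α' = ((1 + δ) / (ε' + δ)) * ᾱ) :
    ∀ θ ∈ Θ, πδ {θ' ∈ Θ | U θ' > U θ + ε'} ≤ ENNReal.ofReal ᾱ →
      volume {θ' ∈ Θ | U θ' > U θ + ε'} ≤ ENNReal.ofReal α' * volume Θ := by
  intro θ hθ hbound
  set A : Set (Fin N → ℝ) := {θ' ∈ Θ | U θ' > U θ + ε'} with hA
  have hAsub : A ⊆ Θ := fun x hx => hx.1
  have hAm : MeasurableSet A := by
    have : A = Θ ∩ {x | U θ + ε' < U x} := by ext x; simp [hA, Set.mem_setOf_eq, and_comm]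
    rw [this]
    exact hΘm.inter (measurableSet_lt measurable_const hUmeas)
  have hAΘ : A ∩ Θ = A := Set.inter_eq_left.mpr hAsub
  set I : ENNReal := ∫⁻ x in Θ, ENNReal.ofReal (U x + δ) with hI
  have hvolΘ : volume Θ < ⊤ := hΘb.measure_lt_top
  -- I ≤ (1+δ) * vol Θ
  have hIle : I ≤ ENNReal.ofReal (1 + δ) * volume Θ := by
    calc I ≤ ∫⁻ _x in Θ, ENNReal.ofReal (1 + δ) := by
          refine setLIntegral_mono_ae (by fun_prop) ?_
          filter_upwards [] with x hx
          exact ENNReal.ofReal_le_ofReal (by linarith [(hU x hx).2])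
      _ = ENNReal.ofReal (1 + δ) * volume Θ := by
          rw [setLIntegral_const]
  have hItop : I ≠ ⊤ :=
    ne_top_of_le_ne_top (ENNReal.mul_ne_top ENNReal.ofReal_ne_top hvolΘ.ne) hIle
  -- I > 0
  have hIpos : I ≠ 0 := by
    have : ENNReal.ofReal δ * volume Θ ≤ I := by
      calc ENNReal.ofReal δ * volume Θ = ∫⁻ _x in Θ, ENNReal.ofReal δ := by
            rw [setLIntegral_const]
        _ ≤ I := by
            refine setLIntegral_mono_ae (by fun_prop) ?_
            filter_upwards [] with x hx
            exact ENNReal.ofReal_le_ofReal (by linarith [(hU x hx).1])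
    intro h0
    rw [h0, le_zero_iff, mul_eq_zero] at this
    rcases this with h | h
    · exact (ENNReal.ofReal_pos.mpr hδ).ne' h
    · exact hΘpos.ne' h
  -- from hypothesis: ∫_A ≤ ᾱ * I
  have hmain : (∫⁻ x in A, ENNReal.ofReal (U x + δ)) ≤ ENNReal.ofReal ᾱ * I := by
    have := hbound
    rw [hπδ, hAΘ, ENNReal.div_le_iff hIpos hItop] at this
    exact this
  -- (ε'+δ) * vol A ≤ ∫_A
  have hlow : ENNReal.ofReal (ε' + δ) * volume A ≤ ∫⁻ x in A, ENNReal.ofReal (U x + δ) := by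
    calc ENNReal.ofReal (ε' + δ) * volume A = ∫⁻ _x in A, ENNReal.ofReal (ε' + δ) := by
          rw [setLIntegral_const]
      _ ≤ _ := by
          refine setLIntegral_mono_ae (by fun_prop) ?_
          filter_upwards [] with x hx
          have h1 : U θ + ε' < U x := hx.2
          have h2 : (0:ℝ) ≤ U θ := (hU θ hθ).1
          exact ENNReal.ofReal_le_ofReal (by linarith)
  have key : ENNReal.ofReal (ε' + δ) * volume A ≤
      ENNReal.ofReal ᾱ * (ENNReal.ofReal (1 + δ) * volume Θ) :=
    le_trans hlow (le_trans hmain (mul_le_mul_right hIle _))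
  have hεδ : (0:ℝ) < ε' + δ := by linarith
  have hεδ0 : ENNReal.ofReal (ε' + δ) ≠ 0 := (ENNReal.ofReal_pos.mpr hεδ).ne'
  rw [mul_comm (ENNReal.ofReal (ε' + δ)),
    ← ENNReal.le_div_iff_mul_le (Or.inl hεδ0) (Or.inl ENNReal.ofReal_ne_top)] at key
  refine le_trans key (le_of_eq ?_)
  rw [hα', mul_comm ((1 + δ) / (ε' + δ)) ᾱ, ENNReal.ofReal_mul hᾱ.1.le,
    ENNReal.ofReal_div_of_pos hεδ]
  rw [ENNReal.div_eq_inv_mul, ENNReal.div_eq_inv_mul]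
  ring
end

section
/- Let Θ ⊂ ℝ^N be a bounded measurable set with positive Lebesgue measure, let U : Θ → [0,1] be measurable, let δ > 0, U_δ = U + δ, and let π_δ be the probability measure on Θ with density proportional to U_δ with respect to Lebesgue measure. Let ᾱ ∈ (0,1], ρ ∈ (0,1], and define ε̃ = (ρ^{−1} − 1)(1+δ) and α̃ = ((1+δ)/(ε̃+δ))·ᾱ. Then { θ ∈ Θ : π_δ{θ' ∈ Θ : ρ·U_δ(θ') > U_δ(θ)} ≤ ᾱ } ⊆ { θ ∈ Θ : π_Leb{θ' ∈ Θ : U(θ') > U(θ) + ε̃} ≤ α̃ · π_Leb(Θ) }; that is, every θ in the first set is an approximate global optimizer of U with value imprecision ε̃ and residual domain α̃. -/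
open MeasureTheory Set

/-- Second step in the proof of the paper's Theorem 1: with `ε̃ = (ρ⁻¹ - 1)(1+δ)` and
`α̃ = ((1+δ)/(ε̃+δ)) ᾱ`, every point of the set
`{θ ∈ Θ : π_δ{θ' ∈ Θ : ρ(U(θ')+δ) > U(θ)+δ} ≤ ᾱ}` is an approximate global optimizer
of `U` with value imprecision `ε̃` and residual domain `α̃`, where
`π_δ(A) = ∫_A (U+δ) dθ / ∫_Θ (U+δ) dθ`. -/
theorem subset_approx_optimizers {N : ℕ} (Θ : Set (Fin N → ℝ))
    (hΘm : MeasurableSet Θ) (hΘb : Bornology.IsBounded Θ) (hΘpos : 0 < volume Θ)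
    (U : (Fin N → ℝ) → ℝ) (hUmeas : Measurable U)
    (hU : ∀ θ ∈ Θ, U θ ∈ Set.Icc (0 : ℝ) 1)
    (δ : ℝ) (hδ : 0 < δ)
    (πδ : Set (Fin N → ℝ) → ENNReal)
    (hπδ : ∀ A : Set (Fin N → ℝ),
      πδ A = (∫⁻ θ in A ∩ Θ, ENNReal.ofReal (U θ + δ)) /
             (∫⁻ θ in Θ, ENNReal.ofReal (U θ + δ)))
    (ᾱ ρ ε' α' : ℝ) (hᾱ : ᾱ ∈ Set.Ioc (0 : ℝ) 1) (hρ : ρ ∈ Set.Ioc (0 : ℝ) 1)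
    (hε' : ε' = (ρ⁻¹ - 1) * (1 + δ))
    (hα' : α' = ((1 + δ) / (ε' + δ)) * ᾱ) :
    {θ ∈ Θ | πδ {θ' ∈ Θ | ρ * (U θ' + δ) > U θ + δ} ≤ ENNReal.ofReal ᾱ} ⊆
      {θ ∈ Θ | volume {θ' ∈ Θ | U θ' > U θ + ε'} ≤ ENNReal.ofReal α' * volume Θ} := by
  obtain ⟨hρ0, hρ1⟩ := hρ
  have hρinv : ρ * ρ⁻¹ = 1 := mul_inv_cancel₀ hρ0.ne'
  have hε'0 : 0 ≤ ε' := by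
    have h1 : (1 : ℝ) ≤ ρ⁻¹ := by nlinarith
    rw [hε']; nlinarith
  have hc : 0 < ε' + δ := by linarith
  have hvolΘtop : volume Θ ≠ ⊤ := hΘb.measure_lt_top.ne
  set D := ∫⁻ θ' in Θ, ENNReal.ofReal (U θ' + δ) with hD
  have hDle : D ≤ ENNReal.ofReal (1 + δ) * volume Θ := by
    calc D ≤ ∫⁻ _ in Θ, ENNReal.ofReal (1 + δ) :=
        setLIntegral_mono' hΘm fun x hx =>
          ENNReal.ofReal_le_ofReal (by linarith [(hU x hx).2])
      _ = ENNReal.ofReal (1 + δ) * volume Θ := setLIntegral_const _ _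
  have hDtop : D ≠ ⊤ :=
    (hDle.trans_lt (ENNReal.mul_lt_top ENNReal.ofReal_lt_top hvolΘtop.lt_top)).ne
  have hD0 : D ≠ 0 := by
    have hge : ENNReal.ofReal δ * volume Θ ≤ D := by
      rw [← setLIntegral_const]
      exact setLIntegral_mono' hΘm fun x hx =>
        ENNReal.ofReal_le_ofReal (by linarith [(hU x hx).1])
    have hpos : 0 < ENNReal.ofReal δ * volume Θ :=
      ENNReal.mul_pos (by simpa [ENNReal.ofReal_eq_zero, not_le] using hδ) hΘpos.ne'
    exact (hpos.trans_le hge).ne'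
  intro θ hθ
  obtain ⟨hθΘ, hπ⟩ := hθ
  refine ⟨hθΘ, ?_⟩
  obtain ⟨hU0, hU1⟩ := hU θ hθΘ
  set A := {θ' ∈ Θ | ρ * (U θ' + δ) > U θ + δ} with hAdef
  set B := {θ' ∈ Θ | U θ' > U θ + ε'} with hBdef
  have hBsubA : B ⊆ A := by
    rintro θ' ⟨hθ'Θ, hgt⟩
    refine ⟨hθ'Θ, ?_⟩
    have hU1' := (hU θ' hθ'Θ).2
    have hrε : ρ * ε' = (1 - ρ) * (1 + δ) := by
      rw [hε']; field_simp
    show U θ + δ < ρ * (U θ' + δ)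
    nlinarith
  have hBmeas : MeasurableSet B :=
    hΘm.inter (measurableSet_lt measurable_const hUmeas)
  have hAΘ : A ∩ Θ = A := inter_eq_left.mpr fun x hx => hx.1
  have key : ENNReal.ofReal (ε' + δ) * volume B
      ≤ ∫⁻ θ' in B, ENNReal.ofReal (U θ' + δ) := by
    rw [← setLIntegral_const]
    exact setLIntegral_mono' hBmeas fun x hx =>
      ENNReal.ofReal_le_ofReal (by have := hx.2; linarith)
  have h2 : (∫⁻ θ' in B, ENNReal.ofReal (U θ' + δ))
      ≤ ∫⁻ θ' in A, ENNReal.ofReal (U θ' + δ) := lintegral_mono_set hBsubA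
  have h3 : (∫⁻ θ' in A, ENNReal.ofReal (U θ' + δ)) ≤ ENNReal.ofReal ᾱ * D := by
    have h := hπ
    rw [hπδ, hAΘ] at h
    exact (ENNReal.div_le_iff_le_mul (Or.inl hD0) (Or.inl hDtop)).1 h
  have h4 : ENNReal.ofReal ᾱ * D
      ≤ ENNReal.ofReal ᾱ * (ENNReal.ofReal (1 + δ) * volume Θ) := mul_le_mul_right hDle _
  have h5 : ENNReal.ofReal ᾱ * (ENNReal.ofReal (1 + δ) * volume Θ)
      = ENNReal.ofReal (ε' + δ) * (ENNReal.ofReal α' * volume Θ) := by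
    rw [← mul_assoc, ← mul_assoc, ← ENNReal.ofReal_mul hᾱ.1.le, ← ENNReal.ofReal_mul hc.le]
    congr 2
    rw [hα']
    field_simp
  have hfinal := (key.trans (h2.trans (h3.trans (h4.trans_eq h5))))
  exact (ENNReal.mul_le_mul_iff_right (by simpa [ENNReal.ofReal_eq_zero, not_le] using hc)
    ENNReal.ofReal_ne_top).1 hfinal
end
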